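/- arXiv:2009.07550 — 4 statements merged into one kernel-verified Lean document; each statement's English description precedes it below -/
import Mathlib

section
/- Let P_0,…,P_n be complex polynomials, P_j(z) = Σ_{α=0}^{d} c_{jα} z^α, with P_n·P_0 not identically zero and d = max_j deg P_j > 0, and set Q_α(t) = Σ_{j=0}^{n} c_{jα}(−t)^j. Let φ be holomorphic on an open set containing a piecewise smooth contour C and satisfy Σ_{α=0}^{d} (Q_α φ)^{(α)}(t) ≡ 0 there. Assume that for every 0 ≤ j ≤ n and 0 ≤ α ≤ d the integrals ∫_C ((−t)^j φ(t))^{(α)} e^{−zt} dt converge absolutely with respect to arc length of C, locally uniformly with respect to z ∈ ℂ, and that the boundary variations [((−t)^j φ)^{(α−1)}(t) e^{−zt}]_C vanish for all 0 ≤ j ≤ n and 1 ≤ α ≤ d. Then w(z) = (1/(2πi)) ∫_C φ(t) e^{−zt} dt defines an entire function satisfying Σ_{j=0}^{n} P_j(z) w^{(j)}(z) = 0. -/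
open Complex MeasureTheory Filter Set

noncomputable section

/- A contour is a piecewise continuously differentiable path `γ : ℝ → ℂ` (the parameter
interval, possibly unbounded, being reparametrized to all of `ℝ`); contour integrals
`∫_C F(t) dt` are `∫ s, F (γ s) * γ' s`, and the variation `[Ψ]_C` is
`lim_{s→+∞} Ψ(γ s) − lim_{s→−∞} Ψ(γ s)`. -/

/-- FTC over the whole real line with a countable exceptional set. -/
lemma ftc_line {T : Set ℝ} (hT : T.Countable) {G g : ℝ → ℂ} {l : ℂ}
    (hGc : Continuous G) (hG : ∀ s ∉ T, HasDerivAt G (g s) s)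
    (hgi : MeasureTheory.Integrable g)
    (htop : Tendsto G atTop (nhds l)) (hbot : Tendsto G atBot (nhds l)) :
    ∫ s : ℝ, g s = 0 := by
  have key : ∀ k : ℕ, ∫ s in (-(k : ℝ))..(k : ℝ), g s = G k - G (-(k : ℝ)) := fun k =>
    integral_eq_of_hasDerivAt_off_countable G g hT hGc.continuousOn
      (fun x hx => hG x hx.2) hgi.intervalIntegrable
  have hneg : Tendsto (fun k : ℕ => -(k : ℝ)) atTop atBot :=
    tendsto_neg_atBot_iff.2 tendsto_natCast_atTop_atTop
  have h1 : Tendsto (fun k : ℕ => ∫ s in (-(k : ℝ))..(k : ℝ), g s) atTop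
      (nhds (∫ s : ℝ, g s)) :=
    MeasureTheory.intervalIntegral_tendsto_integral hgi hneg tendsto_natCast_atTop_atTop
  have h2 : Tendsto (fun k : ℕ => G k - G (-(k : ℝ))) atTop (nhds (l - l)) :=
    (htop.comp tendsto_natCast_atTop_atTop).sub (hbot.comp hneg)
  have h1' : Tendsto (fun k : ℕ => G k - G (-(k : ℝ))) atTop (nhds (∫ s : ℝ, g s)) :=
    h1.congr fun k => key k
  simpa using tendsto_nhds_unique h1' h2

lemma analyticOnNhd_iteratedDeriv {U : Set ℂ} {f : ℂ → ℂ} (hf : AnalyticOnNhd ℂ f U) (α : ℕ) :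
    AnalyticOnNhd ℂ (iteratedDeriv α f) U := by
  induction α with
  | zero => simpa [iteratedDeriv_zero] using hf
  | succ α ih => rw [iteratedDeriv_succ]; exact ih.deriv

lemma iteratedDeriv_sum_const_mul {U : Set ℂ} (hU : IsOpen U) (m : ℕ) (c : ℕ → ℂ)
    (f : ℕ → ℂ → ℂ) (hf : ∀ j, AnalyticOnNhd ℂ (f j) U) (α : ℕ) :
    ∀ t ∈ U, iteratedDeriv α (fun s => ∑ j ∈ Finset.range m, c j * f j s) t
      = ∑ j ∈ Finset.range m, c j * iteratedDeriv α (f j) t := by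
  induction α with
  | zero => intro t _; simp
  | succ α ih =>
    intro t ht
    rw [iteratedDeriv_succ]
    have hEq : deriv (iteratedDeriv α fun s => ∑ j ∈ Finset.range m, c j * f j s) t
        = deriv (fun t => ∑ j ∈ Finset.range m, c j * iteratedDeriv α (f j) t) t := by
      apply Filter.EventuallyEq.deriv_eq
      filter_upwards [hU.mem_nhds ht] with x hx
      exact ih x hx
    rw [hEq, deriv_fun_sum (fun j _ => ?_)]
    · refine Finset.sum_congr rfl fun j _ => ?_
      rw [deriv_const_mul _ ((analyticOnNhd_iteratedDeriv (hf j) α t ht).differentiableAt),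
        iteratedDeriv_succ]
    · exact ((analyticOnNhd_iteratedDeriv (hf j) α t ht).differentiableAt).const_mul _

/-- The contour integral `∫_C ((−t)^j φ(t))^{(α)} e^{−zt} dt`. -/
def Jint (φ : ℂ → ℂ) (γ γ' : ℝ → ℂ) (j α : ℕ) (z : ℂ) : ℂ :=
  ∫ s : ℝ, iteratedDeriv α (fun t => (-t) ^ j * φ t) (γ s) * Complex.exp (-z * γ s) * γ' s

theorem statement0
    (n d : ℕ) (hd : 0 < d) (c : ℕ → ℕ → ℂ)
    -- `P_j(z) = Σ_{α ≤ d} c_{jα} z^α`; `P_n · P_0` not identically zero;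
    -- `d = max_j deg P_j > 0`
    (hPn : ∃ α ≤ d, c n α ≠ 0) (hP0 : ∃ α ≤ d, c 0 α ≠ 0)
    (hdmax : ∃ j ≤ n, c j d ≠ 0)
    -- `φ` is holomorphic on an open set `U` containing the contour, and satisfies
    -- `Σ_{α ≤ d} (Q_α φ)^{(α)} ≡ 0` there, where `Q_α(t) = Σ_{j ≤ n} c_{jα} (−t)^j`
    (U : Set ℂ) (hU : IsOpen U) (φ : ℂ → ℂ) (hφ : DifferentiableOn ℂ φ U)
    (hODE : ∀ t ∈ U,
      ∑ α ∈ Finset.range (d + 1),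
        iteratedDeriv α (fun s => (∑ j ∈ Finset.range (n + 1), c j α * (-s) ^ j) * φ s) t = 0)
    -- the contour: a continuous, piecewise continuously differentiable path in `U`
    (γ γ' : ℝ → ℂ) (hγU : ∀ s, γ s ∈ U) (hγc : Continuous γ)
    (T : Set ℝ) (hT : T.Countable) (hγ' : ∀ s ∉ T, HasDerivAt γ (γ' s) s)
    -- the integrals `∫_C ((−t)^j φ(t))^{(α)} e^{−zt} dt` converge absolutely with respect
    -- to arc length, locally uniformly with respect to `z`
    (hconv : ∀ j ≤ n, ∀ α ≤ d, ∀ r : ℝ, 0 < r → ∃ g : ℝ → ℝ,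
      MeasureTheory.Integrable g ∧
      ∀ z : ℂ, ‖z‖ ≤ r →
        MeasureTheory.Integrable (fun s : ℝ =>
          iteratedDeriv α (fun t => (-t) ^ j * φ t) (γ s) * Complex.exp (-z * γ s) * γ' s) ∧
        ∀ s : ℝ, ‖iteratedDeriv α (fun t => (-t) ^ j * φ t) (γ s) *
            Complex.exp (-z * γ s)‖ * ‖γ' s‖ ≤ g s)
    -- the boundary variations `[((−t)^j φ)^{(α−1)}(t) e^{−zt}]_C` vanish
    (hbd : ∀ j ≤ n, ∀ α, 1 ≤ α → α ≤ d → ∀ z : ℂ, ∃ l : ℂ,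
      Filter.Tendsto (fun s : ℝ => iteratedDeriv (α - 1) (fun t => (-t) ^ j * φ t) (γ s) *
        Complex.exp (-z * γ s)) Filter.atTop (nhds l) ∧
      Filter.Tendsto (fun s : ℝ => iteratedDeriv (α - 1) (fun t => (-t) ^ j * φ t) (γ s) *
        Complex.exp (-z * γ s)) Filter.atBot (nhds l))
    -- the Laplace contour integral
    (w : ℂ → ℂ)
    (hw : ∀ z : ℂ, w z = (1 / (2 * Real.pi * Complex.I)) *
      ∫ s : ℝ, φ (γ s) * Complex.exp (-z * γ s) * γ' s) :
    Differentiable ℂ w ∧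
      ∀ z : ℂ, ∑ j ∈ Finset.range (n + 1),
        (∑ α ∈ Finset.range (d + 1), c j α * z ^ α) * iteratedDeriv j w z = 0 := by
    -- Analyticity facts
  have hφa : AnalyticOnNhd ℂ φ U := hφ.analyticOnNhd hU
  have hFa : ∀ j : ℕ, AnalyticOnNhd ℂ (fun t : ℂ => (-t) ^ j * φ t) U := fun j x hx =>
    (((analyticAt_id).neg).pow j).mul (hφa x hx)
  have hDa : ∀ j α : ℕ, AnalyticOnNhd ℂ (iteratedDeriv α (fun t : ℂ => (-t) ^ j * φ t)) U :=
    fun j α => analyticOnNhd_iteratedDeriv (hFa j) α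
  -- Integrability at every `z`
  have hInt : ∀ j, j ≤ n → ∀ α, α ≤ d → ∀ z : ℂ, MeasureTheory.Integrable (fun s : ℝ =>
      iteratedDeriv α (fun t => (-t) ^ j * φ t) (γ s) * Complex.exp (-z * γ s) * γ' s) := by
    intro j hj α hα z
    obtain ⟨g, hgint, hg⟩ := hconv j hj α hα (‖z‖ + 1)
      (by positivity)
    exact (hg z (by linarith [norm_nonneg z])).1
  -- Integration by parts:  `Jint j α z = z ^ α * Jint j 0 z`
  have hIBP : ∀ j, j ≤ n → ∀ α, α ≤ d → ∀ z : ℂ,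
      Jint φ γ γ' j α z = z ^ α * Jint φ γ γ' j 0 z := by
    intro j hj α
    induction α with
    | zero => intro _ z; simp
    | succ α ih =>
      intro hα z
      have hα' : α ≤ d := by omega
      obtain ⟨l, hl₁, hl₂⟩ := hbd j hj (α + 1) (by omega) hα z
      simp only [Nat.add_sub_cancel] at hl₁ hl₂
      set D : ℂ → ℂ := iteratedDeriv α (fun t => (-t) ^ j * φ t) with hD
      set D1 : ℂ → ℂ := iteratedDeriv (α + 1) (fun t => (-t) ^ j * φ t) with hD1
      have hGc : Continuous fun s : ℝ => D (γ s) * Complex.exp (-z * γ s) := by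
        have h1 : Continuous fun s : ℝ => D (γ s) :=
          continuous_iff_continuousAt.2 fun s =>
            ((hDa j α (γ s) (hγU s)).continuousAt).comp hγc.continuousAt
        exact h1.mul (Complex.continuous_exp.comp (continuous_const.mul hγc))
      have hder : ∀ s ∉ T, HasDerivAt (fun s : ℝ => D (γ s) * Complex.exp (-z * γ s))
          (D1 (γ s) * Complex.exp (-z * γ s) * γ' s
            - z * (D (γ s) * Complex.exp (-z * γ s) * γ' s)) s := by
        intro s hs
        have hd1 : HasDerivAt D (D1 (γ s)) (γ s) := by
          have hdiff : DifferentiableAt ℂ D (γ s) := (hDa j α (γ s) (hγU s)).differentiableAt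
          have h := hdiff.hasDerivAt
          have he : deriv D (γ s) = D1 (γ s) := by
            rw [hD, hD1, iteratedDeriv_succ]
          rwa [he] at h
        have h2 : HasDerivAt (fun s : ℝ => D (γ s)) (D1 (γ s) * γ' s) s :=
          HasDerivAt.comp s hd1 (hγ' s hs)
        have h3 : HasDerivAt (fun s : ℝ => Complex.exp (-z * γ s))
            (Complex.exp (-z * γ s) * (-z * γ' s)) s := ((hγ' s hs).const_mul (-z)).cexp
        have h4 := h2.mul h3
        refine h4.congr_deriv ?_
        ring
      have hint1 := hInt j hj (α + 1) hα z
      have hint0 := hInt j hj α hα' z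
      have hgi : MeasureTheory.Integrable (fun s : ℝ =>
          D1 (γ s) * Complex.exp (-z * γ s) * γ' s
            - z * (D (γ s) * Complex.exp (-z * γ s) * γ' s)) :=
        hint1.sub (hint0.const_mul z)
      have hzero := ftc_line hT hGc hder hgi hl₁ hl₂
      rw [MeasureTheory.integral_sub hint1 (hint0.const_mul z),
        MeasureTheory.integral_const_mul, sub_eq_zero] at hzero
      have e1 : Jint φ γ γ' j (α + 1) z
          = ∫ s : ℝ, D1 (γ s) * Complex.exp (-z * γ s) * γ' s := rfl
      have e0 : Jint φ γ γ' j α z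
          = ∫ s : ℝ, D (γ s) * Complex.exp (-z * γ s) * γ' s := rfl
      rw [e1, hzero, ← e0, ih hα' z, pow_succ]
      ring
  -- The combination `Σ_j P_j(z) · Jint j 0 z` vanishes
  have hsum : ∀ z : ℂ, ∑ j ∈ Finset.range (n + 1),
      (∑ α ∈ Finset.range (d + 1), c j α * z ^ α) * Jint φ γ γ' j 0 z = 0 := by
    intro z
    have e1 : ∀ j ∈ Finset.range (n + 1),
        (∑ α ∈ Finset.range (d + 1), c j α * z ^ α) * Jint φ γ γ' j 0 z
          = ∑ α ∈ Finset.range (d + 1), c j α * Jint φ γ γ' j α z := by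
      intro j hj
      have hj' : j ≤ n := by have := Finset.mem_range.1 hj; omega
      rw [Finset.sum_mul]
      refine Finset.sum_congr rfl fun α hα => ?_
      have hα' : α ≤ d := by have := Finset.mem_range.1 hα; omega
      rw [hIBP j hj' α hα' z]
      ring
    rw [Finset.sum_congr rfl e1, Finset.sum_comm]
    have e2 : ∀ α ∈ Finset.range (d + 1),
        ∑ j ∈ Finset.range (n + 1), c j α * Jint φ γ γ' j α z
          = ∫ s : ℝ, (∑ j ∈ Finset.range (n + 1),
              c j α * iteratedDeriv α (fun t => (-t) ^ j * φ t) (γ s))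
              * Complex.exp (-z * γ s) * γ' s := by
      intro α hα
      have hα' : α ≤ d := by have := Finset.mem_range.1 hα; omega
      have step : ∀ j ∈ Finset.range (n + 1), c j α * Jint φ γ γ' j α z
          = ∫ s : ℝ, c j α * (iteratedDeriv α (fun t => (-t) ^ j * φ t) (γ s)
              * Complex.exp (-z * γ s) * γ' s) := by
        intro j hj
        rw [MeasureTheory.integral_const_mul]
        rfl
      rw [Finset.sum_congr rfl step, ← MeasureTheory.integral_finset_sum]
      · congr 1
        funext s
        rw [Finset.sum_mul, Finset.sum_mul]
        exact Finset.sum_congr rfl fun j _ => by ring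
      · intro j hj
        have hj' : j ≤ n := by have := Finset.mem_range.1 hj; omega
        exact (hInt j hj' α hα' z).const_mul _
    rw [Finset.sum_congr rfl e2, ← MeasureTheory.integral_finset_sum]
    · have hzero : (fun s : ℝ => ∑ α ∈ Finset.range (d + 1),
          (∑ j ∈ Finset.range (n + 1),
            c j α * iteratedDeriv α (fun t => (-t) ^ j * φ t) (γ s))
            * Complex.exp (-z * γ s) * γ' s) = fun _ => (0 : ℂ) := by
        funext s
        have key : ∀ α ∈ Finset.range (d + 1),
            (∑ j ∈ Finset.range (n + 1),
              c j α * iteratedDeriv α (fun t => (-t) ^ j * φ t) (γ s))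
              * Complex.exp (-z * γ s) * γ' s
            = iteratedDeriv α
                (fun u => (∑ j ∈ Finset.range (n + 1), c j α * (-u) ^ j) * φ u) (γ s)
                * Complex.exp (-z * γ s) * γ' s := by
          intro α _
          congr 2
          have h := iteratedDeriv_sum_const_mul hU (n + 1) (fun j => c j α)
            (fun j t => (-t) ^ j * φ t) (fun j => hFa j) α (γ s) (hγU s)
          rw [← h]
          congr 1
          funext u
          rw [Finset.sum_mul]
          exact Finset.sum_congr rfl fun j _ => (mul_assoc _ _ _).symm
        rw [Finset.sum_congr rfl key, ← Finset.sum_mul, ← Finset.sum_mul,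
          hODE (γ s) (hγU s), zero_mul, zero_mul]
      rw [hzero, MeasureTheory.integral_zero]
    · intro α hα
      have hα' : α ≤ d := by have := Finset.mem_range.1 hα; omega
      have heq : (fun s : ℝ => (∑ j ∈ Finset.range (n + 1),
            c j α * iteratedDeriv α (fun t => (-t) ^ j * φ t) (γ s))
            * Complex.exp (-z * γ s) * γ' s)
          = fun s : ℝ => ∑ j ∈ Finset.range (n + 1),
            c j α * (iteratedDeriv α (fun t => (-t) ^ j * φ t) (γ s)
              * Complex.exp (-z * γ s) * γ' s) := by
        funext s
        rw [Finset.sum_mul, Finset.sum_mul]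
        exact Finset.sum_congr rfl fun j _ => by ring
      rw [heq]
      refine MeasureTheory.integrable_finset_sum _ fun j hj => ?_
      have hj' : j ≤ n := by have := Finset.mem_range.1 hj; omega
      exact (hInt j hj' α hα' z).const_mul _
  -- Differentiation under the integral sign
  have hDer : ∀ j, j < n → ∀ z₀ : ℂ, HasDerivAt (fun z => Jint φ γ γ' j 0 z)
      (Jint φ γ γ' (j + 1) 0 z₀) z₀ := by
    intro j hj z₀
    obtain ⟨g, hgint, hg⟩ := hconv (j + 1) (by omega) 0 (Nat.zero_le d)
      (‖z₀‖ + 1) (by positivity)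
    refine (hasDerivAt_integral_of_dominated_loc_of_deriv_le (μ := MeasureTheory.volume)
      (F := fun (z : ℂ) (s : ℝ) =>
        iteratedDeriv 0 (fun t => (-t) ^ j * φ t) (γ s) * Complex.exp (-z * γ s) * γ' s)
      (F' := fun (z : ℂ) (s : ℝ) =>
        iteratedDeriv 0 (fun t => (-t) ^ (j + 1) * φ t) (γ s) * Complex.exp (-z * γ s) * γ' s)
      (x₀ := z₀) (bound := g) (Metric.ball_mem_nhds z₀ one_pos)
      (Filter.Eventually.of_forall fun z =>
        (hInt j (by omega) 0 (Nat.zero_le d) z).aestronglyMeasurable)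
      (hInt j (by omega) 0 (Nat.zero_le d) z₀)
      ((hInt (j + 1) (by omega) 0 (Nat.zero_le d) z₀).aestronglyMeasurable)
      (Filter.Eventually.of_forall fun s => ?_) hgint
      (Filter.Eventually.of_forall fun s => ?_)).2
    · intro z hz
      have hzle : ‖z‖ ≤ ‖z₀‖ + 1 := by
        have hdist : dist z z₀ < 1 := Metric.mem_ball.1 hz
        calc ‖z‖ = ‖z₀ + (z - z₀)‖ := by ring_nf
          _ ≤ ‖z₀‖ + ‖z - z₀‖ := norm_add_le _ _
          _ ≤ ‖z₀‖ + 1 := by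
              rw [← dist_eq_norm]; linarith
      have hb := (hg z hzle).2 s
      calc ‖iteratedDeriv 0 (fun t => (-t) ^ (j + 1) * φ t) (γ s)
            * Complex.exp (-z * γ s) * γ' s‖
          = ‖iteratedDeriv 0 (fun t => (-t) ^ (j + 1) * φ t) (γ s)
              * Complex.exp (-z * γ s)‖ * ‖γ' s‖ := by
            rw [norm_mul]
        _ ≤ g s := hb
    · intro z hz
      have h0 : HasDerivAt (fun z : ℂ => -z * γ s) (-1 * γ s) z :=
        (hasDerivAt_id z).neg.mul_const (γ s)
      have h3 : HasDerivAt (fun z : ℂ =>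
          iteratedDeriv 0 (fun t => (-t) ^ j * φ t) (γ s) * Complex.exp (-z * γ s) * γ' s)
          (iteratedDeriv 0 (fun t => (-t) ^ j * φ t) (γ s)
            * (Complex.exp (-z * γ s) * (-1 * γ s)) * γ' s) z :=
        (h0.cexp.const_mul _).mul_const _
      refine h3.congr_deriv ?_
      simp only [iteratedDeriv_zero]
      rw [pow_succ]
      ring
  -- Integral representation of the derivatives of `w`
  have hJ00 : ∀ z : ℂ, Jint φ γ γ' 0 0 z
      = ∫ s : ℝ, φ (γ s) * Complex.exp (-z * γ s) * γ' s := by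
    intro z
    simp only [Jint, iteratedDeriv_zero, pow_zero, one_mul]
  have hrep : ∀ j, j ≤ n → ∀ z : ℂ, iteratedDeriv j w z
      = (1 / (2 * Real.pi * Complex.I)) * Jint φ γ γ' j 0 z := by
    intro j
    induction j with
    | zero => intro _ z; rw [iteratedDeriv_zero, hw z, hJ00 z]
    | succ j ih =>
      intro hj z
      have hfun : iteratedDeriv j w
          = fun z => (1 / (2 * Real.pi * Complex.I)) * Jint φ γ γ' j 0 z :=
        funext fun z => ih (by omega) z
      rw [iteratedDeriv_succ, hfun]
      exact ((hDer j (by omega) z).const_mul _).deriv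
  -- The differential equation for `w`
  have hfinal : ∀ z : ℂ, ∑ j ∈ Finset.range (n + 1),
      (∑ α ∈ Finset.range (d + 1), c j α * z ^ α) * iteratedDeriv j w z = 0 := by
    intro z
    have e : ∀ j ∈ Finset.range (n + 1),
        (∑ α ∈ Finset.range (d + 1), c j α * z ^ α) * iteratedDeriv j w z
          = (1 / (2 * Real.pi * Complex.I))
            * ((∑ α ∈ Finset.range (d + 1), c j α * z ^ α) * Jint φ γ γ' j 0 z) := by
      intro j hj
      have hj' : j ≤ n := by have := Finset.mem_range.1 hj; omega
      rw [hrep j hj' z]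
      ring
    rw [Finset.sum_congr rfl e, ← Finset.mul_sum, hsum z, mul_zero]
  refine ⟨?_, hfinal⟩
  -- Differentiability of `w`
  rcases Nat.eq_zero_or_pos n with hn | hn
  · -- degenerate case `n = 0`: then `w ≡ 0`
    subst hn
    have hcJ : Continuous fun z => Jint φ γ γ' 0 0 z := by
      rw [continuous_iff_continuousAt]
      intro z₀
      obtain ⟨g, hgint, hg⟩ := hconv 0 le_rfl 0 (Nat.zero_le d)
        (‖z₀‖ + 1) (by positivity)
      refine MeasureTheory.continuousAt_of_dominated (F := fun (z : ℂ) (s : ℝ) =>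
          iteratedDeriv 0 (fun t => (-t) ^ 0 * φ t) (γ s) * Complex.exp (-z * γ s) * γ' s)
          (bound := g)
          (Filter.Eventually.of_forall fun z =>
            (hInt 0 le_rfl 0 (Nat.zero_le d) z).aestronglyMeasurable) ?_ hgint ?_
      · filter_upwards [Metric.ball_mem_nhds z₀ one_pos] with z hz
        refine Filter.Eventually.of_forall fun s => ?_
        have hzle : ‖z‖ ≤ ‖z₀‖ + 1 := by
          have hdist : dist z z₀ < 1 := Metric.mem_ball.1 hz
          calc ‖z‖ = ‖z₀ + (z - z₀)‖ := by ring_nf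
            _ ≤ ‖z₀‖ + ‖z - z₀‖ := norm_add_le _ _
            _ ≤ ‖z₀‖ + 1 := by
                rw [← dist_eq_norm]; linarith
        have hb := (hg z hzle).2 s
        calc ‖iteratedDeriv 0 (fun t => (-t) ^ 0 * φ t) (γ s)
              * Complex.exp (-z * γ s) * γ' s‖
            = ‖iteratedDeriv 0 (fun t => (-t) ^ 0 * φ t) (γ s)
                * Complex.exp (-z * γ s)‖ * ‖γ' s‖ := by
              rw [norm_mul]
          _ ≤ g s := hb
      · refine Filter.Eventually.of_forall fun s => ?_
        exact ((continuous_const.mul (Complex.continuous_exp.comp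
          (continuous_neg.mul continuous_const))).mul continuous_const).continuousAt
    have hpz : ∀ z : ℂ, (∑ α ∈ Finset.range (d + 1), c 0 α * z ^ α)
        * Jint φ γ γ' 0 0 z = 0 := by
      intro z
      have h := hsum z
      simpa [Finset.sum_range_one] using h
    set p : Polynomial ℂ := ∑ α ∈ Finset.range (d + 1), Polynomial.C (c 0 α) * Polynomial.X ^ α
      with hp
    have hpne : p ≠ 0 := by
      obtain ⟨α₀, hα₀, hc0⟩ := hP0
      intro h
      apply hc0
      have hco : p.coeff α₀ = c 0 α₀ := by
        rw [hp, Polynomial.finset_sum_coeff]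
        simp only [Polynomial.coeff_C_mul, Polynomial.coeff_X_pow]
        rw [Finset.sum_eq_single α₀]
        · simp
        · intro b _ hb
          simp [Ne.symm hb]
        · intro hmem
          exact absurd (Finset.mem_range.2 (by omega)) hmem
      rw [h, Polynomial.coeff_zero] at hco
      exact hco.symm
    have heval : ∀ z : ℂ, p.eval z = ∑ α ∈ Finset.range (d + 1), c 0 α * z ^ α := by
      intro z
      rw [hp]
      simp [Polynomial.eval_finset_sum]
    have hfin : {z : ℂ | p.eval z = 0}.Finite := Polynomial.finite_setOf_isRoot hpne
    have hdense : Dense {z : ℂ | p.eval z = 0}ᶜ := hfin.countable.dense_compl ℂ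
    have hJ0 : (fun z => Jint φ γ γ' 0 0 z) = fun _ => (0 : ℂ) := by
      apply Continuous.ext_on hdense hcJ continuous_const
      intro z hz
      have hz' : p.eval z ≠ 0 := hz
      have h := hpz z
      rw [← heval z] at h
      exact (mul_eq_zero.1 h).resolve_left hz'
    have hw0 : w = fun _ => (0 : ℂ) := by
      funext z
      rw [hw z, ← hJ00 z, congrFun hJ0 z, mul_zero]
    rw [hw0]
    exact differentiable_const 0
  · have hw' : w = fun z => (1 / (2 * Real.pi * Complex.I)) * Jint φ γ γ' 0 0 z :=
      funext fun z => by rw [hw z, hJ00 z]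
    rw [hw']
    exact fun z => ((hDer 0 hn z).const_mul _).differentiableAt
end
end

section
/- Suppose the sum Σ_k λ_k of the residues λ_k = res_{t_k}[Q_0/Q_1] of Q_0/Q_1 over all its poles t_k is an integer, so that the kernel φ_L is single-valued on {t : |t| > R_0}. Then for R > R_0 the sum Λ = Σ_{ν=0}^{n−q} Λ_ν equals −(1/(2πi))∮_{|t|=R} φ_L(t)e^{−zt} dt and satisfies |Λ(z)| ≤ A R e^{R|z|} for all z, where A = max_{|t|=R}|φ_L(t)|; consequently Λ either vanishes identically or is a sub-normal solution of L[w] = 0, i.e. an entire solution of order of growth at most 1 (strictly less than the generic order 1 + 1/(n−q)). -/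
open Complex MeasureTheory Filter Set

noncomputable section

/-- The (open) sector `{t : |t| > R₀, |arg t| < π}`. -/
def Sector (R0 : ℝ) : Set ℂ := {t : ℂ | R0 < ‖t‖ ∧ |Complex.arg t| < Real.pi}

/-- The integral of `F` over the contour `C_{R,α,β}` consisting of the ray `t = r e^{iα}`
traversed from `r = +∞` to `r = R`, the circular arc `|t| = R` from `Re^{iα}` through
`Re^{i(α+β)/2}` to `Re^{iβ}`, and the ray `t = r e^{iβ}` traversed from `r = R` to `r = +∞`. -/
def ContourIntegral (F : ℂ → ℂ) (R α β : ℝ) : ℂ :=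
  -(∫ r in Set.Ioi R, F ((r:ℂ) * Complex.exp (Complex.I * α)) * Complex.exp (Complex.I * α))
  + (∫ ϑ in α..β, F ((R:ℂ) * Complex.exp (Complex.I * ϑ)) * (Complex.I * R * Complex.exp (Complex.I * ϑ)))
  + (∫ r in Set.Ioi R, F ((r:ℂ) * Complex.exp (Complex.I * β)) * Complex.exp (Complex.I * β))

/-- The Laplace contour integral `(1/(2πi)) ∫_{C_{R,α,β}} φ(t) e^{-zt} dt`. -/
def LaplaceContour (φ : ℂ → ℂ) (R α β : ℝ) (z : ℂ) : ℂ :=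
  (1 / (2 * Real.pi * Complex.I)) * ContourIntegral (fun t => φ t * Complex.exp (-z * t)) R α β

/-- `w` is an entire solution of `w^{(n)} + Σ_{j<n} (a_j + b_j z) w^{(j)} = 0`. -/
def SolvesL (n : ℕ) (a b : ℕ → ℂ) (w : ℂ → ℂ) : Prop :=
  Differentiable ℂ w ∧
    ∀ z : ℂ, iteratedDeriv n w z + ∑ j ∈ Finset.range n, (a j + b j * z) * iteratedDeriv j w z = 0


/-- The maximum modulus `M(r,f)`. -/
def maxModulus (f : ℂ → ℂ) (r : ℝ) : ℝ :=
  sSup ((fun z => ‖f z‖) '' Metric.sphere (0:ℂ) r)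

/-- The order of growth `ρ(f) = limsup_{r→∞} log log M(r,f) / log r`. -/
def orderOfGrowth (f : ℂ → ℂ) : ℝ :=
  Filter.limsup (fun r => Real.log (Real.log (maxModulus f r)) / Real.log r) Filter.atTop

private lemma iterDeriv_sum {ι : Type*} (s : Finset ι) (f : ι → ℂ → ℂ)
    (hf : ∀ i ∈ s, Differentiable ℂ (f i)) (k : ℕ) (x : ℂ) :
    iteratedDeriv k (fun z => ∑ i ∈ s, f i z) x = ∑ i ∈ s, iteratedDeriv k (f i) x := by
  classical
  induction s using Finset.induction_on with
  | empty => simp [iteratedDeriv_eq_iteratedFDeriv, iteratedFDeriv_zero_fun]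
  | @insert a s ha ih =>
    simp only [Finset.sum_insert ha]
    have hfa : ContDiff ℂ k (f a) := (hf a (Finset.mem_insert_self a s)).contDiff
    have hfs : ContDiff ℂ k (fun z => ∑ i ∈ s, f i z) :=
      (Differentiable.fun_sum fun i hi => hf i (Finset.mem_insert_of_mem hi)).contDiff
    rw [show (fun z => f a z + ∑ i ∈ s, f i z) = (f a + fun z => ∑ i ∈ s, f i z) from rfl,
      iteratedDeriv_eq_iteratedFDeriv, iteratedFDeriv_add_apply hfa.contDiffAt hfs.contDiffAt,
      ContinuousMultilinearMap.add_apply, ← iteratedDeriv_eq_iteratedFDeriv,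
      ← iteratedDeriv_eq_iteratedFDeriv, ih (fun i hi => hf i (Finset.mem_insert_of_mem hi))]

theorem statement13
    (n q : ℕ) (a b : ℕ → ℂ)
    (hn : 2 ≤ n) (hq : q < n)
    (hbq : b q = (-1 : ℂ) ^ (n - q + 1)) (hbq0 : ∀ j, q < j → b j = 0)
    (ha0b0 : a 0 ≠ 0 ∨ b 0 ≠ 0)
    (Q0 Q1 : ℂ → ℂ)
    (hQ0 : ∀ s, Q0 s = (-s) ^ n + ∑ j ∈ Finset.range n, a j * (-s) ^ j)
    (hQ1 : ∀ s, Q1 s = ∑ j ∈ Finset.range (q + 1), b j * (-s) ^ j)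
    (R0 : ℝ) (hR00 : 0 ≤ R0)
    -- all poles of `Q_0/Q_1` lie in `|t| ≤ R0`
    (hQ1ne : ∀ s : ℂ, R0 < ‖s‖ → Q1 s ≠ 0)
    -- the sum of the residues of `Q_0/Q_1` over all its poles is an integer `S`
    (S : ℤ)
    (hressum : ∀ R' : ℝ, R0 < R' →
      (1 / (2 * Real.pi * Complex.I)) * (∮ s in C(0, R'), Q0 s / Q1 s) = (S : ℂ))
    -- hence the kernel `φ_L` is single-valued (holomorphic) on `|t| > R0`
    (φL : ℂ → ℂ)
    (hφd : DifferentiableOn ℂ φL {s : ℂ | R0 < ‖s‖})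
    (hODE : ∀ s : ℂ, R0 < ‖s‖ →
      Q0 s * φL s + deriv (fun u => Q1 u * φL u) s = 0)
    (hφne : ∃ s : ℂ, R0 < ‖s‖ ∧ φL s ≠ 0)
    -- the contour integral solutions `Λ_ν`, `0 ≤ ν ≤ n − q`, with `θ_k = kπ/(n−q+1)`
    (R : ℝ) (hR : R0 < R)
    (Λ : ℕ → ℂ → ℂ)
    (hΛ : ∀ ν ≤ n - q, ∀ z : ℂ, Λ ν z =
      LaplaceContour φL R (((2 * ν + 1 : ℤ) * Real.pi) / ((n : ℝ) - q + 1))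
        (((2 * (ν : ℤ) - 1) * Real.pi) / ((n : ℝ) - q + 1)) z)
    (hΛsol : ∀ ν ≤ n - q, SolvesL n a b (Λ ν))
    (A : ℝ) (hA : A = sSup ((fun s => ‖φL s‖) '' Metric.sphere (0:ℂ) R)) :
    (∀ z : ℂ, (∑ ν ∈ Finset.range (n - q + 1), Λ ν z) =
      -((1 / (2 * Real.pi * Complex.I)) * ∮ s in C(0, R), φL s * Complex.exp (-z * s))) ∧
    (∀ z : ℂ, ‖(∑ ν ∈ Finset.range (n - q + 1), Λ ν z)‖ ≤
      A * R * Real.exp (R * ‖z‖)) ∧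
    ((∀ z : ℂ, (∑ ν ∈ Finset.range (n - q + 1), Λ ν z) = 0) ∨
      (SolvesL n a b (fun z => ∑ ν ∈ Finset.range (n - q + 1), Λ ν z) ∧
        orderOfGrowth (fun z => ∑ ν ∈ Finset.range (n - q + 1), Λ ν z) ≤ 1 ∧
        orderOfGrowth (fun z => ∑ ν ∈ Finset.range (n - q + 1), Λ ν z) <
          1 + 1 / ((n : ℝ) - q))) := by
  have hq' : q ≤ n := hq.le
  have hRpos : 0 < R := lt_of_le_of_lt hR00 hR
  set m : ℕ := n - q + 1 with hm
  have hmr : ((n : ℝ) - q + 1) = (m : ℝ) := by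
    rw [hm]; push_cast [Nat.cast_sub hq']; ring
  have hmrpos : (0:ℝ) < (m : ℝ) := by positivity
  -- basic continuity facts
  have hcont : ContinuousOn φL {s : ℂ | R0 < ‖s‖} := hφd.continuousOn
  have hsub : Metric.sphere (0:ℂ) R ⊆ {s : ℂ | R0 < ‖s‖} := by
    intro t ht
    have : ‖t‖ = R := mem_sphere_zero_iff_norm.mp ht
    simpa [Set.mem_setOf_eq, this] using hR
  -- Part 1
  have hkey : ∀ z : ℂ, (∑ ν ∈ Finset.range m, Λ ν z) =
      -((1 / (2 * Real.pi * Complex.I)) * ∮ s in C(0, R), φL s * Complex.exp (-z * s)) := by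
    intro z
    set Ray : ℝ → ℂ := fun γ => ∫ r in Set.Ioi R,
        φL ((r:ℂ) * Complex.exp (Complex.I * γ)) * Complex.exp (-z * ((r:ℂ) * Complex.exp (Complex.I * γ)))
          * Complex.exp (Complex.I * γ) with hRay
    set G : ℝ → ℂ := fun ϑ =>
        φL ((R:ℂ) * Complex.exp (Complex.I * ϑ)) * Complex.exp (-z * ((R:ℂ) * Complex.exp (Complex.I * ϑ)))
          * (Complex.I * R * Complex.exp (Complex.I * ϑ)) with hG
    set θf : ℕ → ℝ := fun ν => ((2*(ν:ℝ) - 1) * Real.pi) / ((n:ℝ) - q + 1) with hθf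
    have hexp2 : ∀ γ : ℝ, Complex.exp (Complex.I * ((γ + 2*Real.pi : ℝ) : ℂ)) = Complex.exp (Complex.I * γ) := by
      intro γ
      push_cast
      rw [mul_add, Complex.exp_add,
        show Complex.I * (2*(Real.pi:ℂ)) = 2*(Real.pi:ℂ)*Complex.I from by ring,
        Complex.exp_two_pi_mul_I, mul_one]
    have hLC : ∀ α β : ℝ, LaplaceContour φL R α β z = (1/(2*Real.pi*Complex.I)) *
        (-(Ray α) + (∫ ϑ in α..β, G ϑ) + Ray β) := fun α β => rfl
    have hα : ∀ ν : ℕ, (((2 * ν + 1 : ℤ) * Real.pi) / ((n : ℝ) - q + 1)) = θf (ν+1) := by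
      intro ν; rw [hθf]; push_cast; ring
    have hβ : ∀ ν : ℕ, (((2 * (ν : ℤ) - 1) * Real.pi) / ((n : ℝ) - q + 1)) = θf ν := by
      intro ν; rw [hθf]; push_cast; ring
    have hθm : θf m = θf 0 + 2*Real.pi := by
      rw [hθf]; simp only [hmr]
      field_simp
      ring
    have hGper : Function.Periodic G (2*Real.pi) := by
      intro ϑ; simp only [hG]; rw [hexp2]
    have hmm : ∀ ϑ : ℝ, (R:ℂ) * Complex.exp (Complex.I * ϑ) ∈ {s : ℂ | R0 < ‖s‖} := by
      intro ϑ
      simp only [Set.mem_setOf_eq, norm_mul, Complex.norm_exp, Complex.norm_real, Real.norm_eq_abs,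
        Complex.mul_re, Complex.I_re, Complex.I_im, Complex.ofReal_re, Complex.ofReal_im,
        abs_of_pos hRpos]
      norm_num
      exact hR
    have hGcont : Continuous G := by
      rw [hG]
      refine Continuous.mul (Continuous.mul ?_ ?_) ?_
      · exact hcont.comp_continuous (by fun_prop) hmm
      · fun_prop
      · fun_prop
    have hRayper : Ray (θf 0 + 2*Real.pi) = Ray (θf 0) := by
      simp only [hRay, hexp2]
    have hcirc : (∮ s in C(0,R), φL s * Complex.exp (-z*s)) = ∫ ϑ in (0:ℝ)..(2*Real.pi), G ϑ := by
      rw [circleIntegral]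
      refine intervalIntegral.integral_congr fun ϑ _ => ?_
      simp only [hG, deriv_circleMap, circleMap, smul_eq_mul, zero_add, mul_comm Complex.I (ϑ:ℂ)]
      ring
    have hint : ∀ k < m, IntervalIntegrable G volume (θf k) (θf (k+1)) :=
      fun k _ => hGcont.intervalIntegrable _ _
    have hsum : ∑ ν ∈ Finset.range m, Λ ν z
        = (1/(2*Real.pi*Complex.I)) * ∑ ν ∈ Finset.range m,
            (-(Ray (θf (ν+1))) + (∫ ϑ in (θf (ν+1))..(θf ν), G ϑ) + Ray (θf ν)) := by
      rw [Finset.mul_sum]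
      refine Finset.sum_congr rfl fun ν hν => ?_
      have hν' : ν ≤ n - q := by have := Finset.mem_range.mp hν; omega
      rw [hΛ ν hν' z, hα ν, hβ ν, hLC]
    rw [hsum]
    have hsplit : ∑ ν ∈ Finset.range m,
          (-(Ray (θf (ν+1))) + (∫ ϑ in (θf (ν+1))..(θf ν), G ϑ) + Ray (θf ν))
        = (∑ ν ∈ Finset.range m, (Ray (θf ν) - Ray (θf (ν+1))))
          + ∑ ν ∈ Finset.range m, ∫ ϑ in (θf (ν+1))..(θf ν), G ϑ := by
      rw [← Finset.sum_add_distrib]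
      exact Finset.sum_congr rfl fun ν _ => by ring
    have h2 : ∑ ν ∈ Finset.range m, ∫ ϑ in (θf (ν+1))..(θf ν), G ϑ
        = -∮ s in C(0,R), φL s * Complex.exp (-z*s) := by
      rw [Finset.sum_congr rfl
          (fun ν _ => (intervalIntegral.integral_symm (θf ν) (θf (ν+1)) : _)),
        Finset.sum_neg_distrib, intervalIntegral.sum_integral_adjacent_intervals hint,
        hθm, hGper.intervalIntegral_add_eq (θf 0) 0, zero_add, ← hcirc]
    rw [hsplit, Finset.sum_range_sub' (fun ν => Ray (θf ν)) m, h2, hθm, hRayper]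
    ring
  -- bounds on A
  have hbddA : BddAbove ((fun s => ‖φL s‖) '' Metric.sphere (0:ℂ) R) :=
    (isCompact_sphere 0 R).bddAbove_image
      (continuous_norm.comp_continuousOn (hcont.mono hsub))
  have hAle : ∀ t ∈ Metric.sphere (0:ℂ) R, ‖φL t‖ ≤ A := fun t ht =>
    hA ▸ le_csSup hbddA ⟨t, ht, rfl⟩
  have hAnn : 0 ≤ A := by
    obtain ⟨t, ht⟩ := (NormedSpace.sphere_nonempty (x := (0:ℂ)) (r := R)).mpr hRpos.le
    exact le_trans (norm_nonneg _) (hAle t ht)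
  -- Part 2
  have hcabs : ‖(1 / (2 * Real.pi * Complex.I) : ℂ)‖ = 1 / (2 * Real.pi) := by
    simp [norm_div, norm_mul, Complex.norm_I, Complex.norm_real, Real.norm_eq_abs,
      abs_of_pos Real.pi_pos]
  have hbound : ∀ z : ℂ, ‖∑ ν ∈ Finset.range m, Λ ν z‖ ≤
      A * R * Real.exp (R * ‖z‖) := by
    intro z
    rw [hkey z, norm_neg, norm_mul, hcabs]
    have hcint : ‖∮ s in C(0,R), φL s * Complex.exp (-z * s)‖ ≤
        2 * Real.pi * R * (A * Real.exp (R * ‖z‖)) := by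
      refine circleIntegral.norm_integral_le_of_norm_le_const hRpos.le fun t ht => ?_
      rw [norm_mul]
      have habs_t : ‖t‖ = R := by
        exact mem_sphere_zero_iff_norm.mp ht
      have h2 : ‖Complex.exp (-z * t)‖ ≤ Real.exp (R * ‖z‖) := by
        rw [Complex.norm_exp]
        refine Real.exp_le_exp.mpr ?_
        calc (-z * t).re ≤ |(-z * t).re| := le_abs_self _
          _ ≤ ‖-z * t‖ := Complex.abs_re_le_norm _
          _ = R * ‖z‖ := by rw [norm_mul, norm_neg, habs_t]; ring
      exact mul_le_mul (hAle t ht) h2 (norm_nonneg _) hAnn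
    calc 1 / (2*Real.pi) * ‖∮ s in C(0,R), φL s * Complex.exp (-z * s)‖
        ≤ 1 / (2*Real.pi) * (2 * Real.pi * R * (A * Real.exp (R * ‖z‖))) :=
          mul_le_mul_of_nonneg_left hcint (by positivity)
      _ = A * R * Real.exp (R * ‖z‖) := by
          field_simp
  refine ⟨hkey, hbound, ?_⟩
  -- Part 3
  by_cases hz : ∀ z : ℂ, (∑ ν ∈ Finset.range m, Λ ν z) = 0
  · exact Or.inl hz
  right
  push_neg at hz
  obtain ⟨z0, hz0⟩ := hz
  set Λs : ℂ → ℂ := fun z => ∑ ν ∈ Finset.range m, Λ ν z with hΛs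
  have hdiffs : ∀ ν ∈ Finset.range m, Differentiable ℂ (Λ ν) := fun ν hν =>
    (hΛsol ν (by have := Finset.mem_range.mp hν; omega)).1
  have hdiff : Differentiable ℂ Λs := Differentiable.fun_sum hdiffs
  have hsol : SolvesL n a b Λs := by
    refine ⟨hdiff, fun z => ?_⟩
    simp only [hΛs, iterDeriv_sum (Finset.range m) Λ hdiffs, Finset.mul_sum]
    rw [Finset.sum_comm, ← Finset.sum_add_distrib]
    exact Finset.sum_eq_zero fun ν hν =>
      (hΛsol ν (by have := Finset.mem_range.mp hν; omega)).2 z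
  set c : ℝ := ‖Λs z0‖ with hcdef
  have hc : 0 < c := norm_pos_iff.mpr hz0
  have hApos : 0 < A := by
    rcases hAnn.lt_or_eq with h | h
    · exact h
    · exfalso
      have := hbound z0
      rw [← h] at this
      simp only [zero_mul] at this
      exact absurd (le_antisymm (hcdef ▸ this) hc.le) hc.ne'
  have hlow : ∀ r : ℝ, ‖z0‖ ≤ r → 0 < r → c ≤ maxModulus Λs r := by
    intro r hr hrpos
    have hb : BddAbove ((fun z => ‖Λs z‖) '' Metric.sphere (0:ℂ) r) :=
      (isCompact_sphere 0 r).bddAbove_image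
        (continuous_norm.comp_continuousOn hdiff.continuous.continuousOn)
    have hfr : ∀ w ∈ frontier (Metric.ball (0:ℂ) r), ‖Λs w‖ ≤ maxModulus Λs r := by
      rw [frontier_ball (0:ℂ) hrpos.ne']
      intro w hw
      exact le_csSup hb ⟨w, hw, rfl⟩
    have hmem : z0 ∈ closure (Metric.ball (0:ℂ) r) := by
      rw [closure_ball (0:ℂ) hrpos.ne']
      exact mem_closedBall_zero_iff.mpr hr
    have := Complex.norm_le_of_forall_mem_frontier_norm_le Metric.isBounded_ball
      hdiff.diffContOnCl hfr hmem
    rwa [← hcdef] at this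
  have hup : ∀ r : ℝ, 0 ≤ r → maxModulus Λs r ≤ A * R * Real.exp (R * r) := by
    intro r hr
    refine csSup_le ((((NormedSpace.sphere_nonempty (x := (0:ℂ)) (r := r)).mpr hr).image _)) ?_
    rintro x ⟨w, hw, rfl⟩
    have habs_w : ‖w‖ = r := by
      exact mem_sphere_zero_iff_norm.mp hw
    simpa [habs_w] using hbound w
  have hev : ∀ ε : ℝ, 0 < ε → ∀ᶠ r in atTop,
      Real.log (Real.log (maxModulus Λs r)) / Real.log r ≤ 1 + ε := by
    intro ε hε
    set K : ℝ := |Real.log c| + |Real.log (A*R)| with hK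
    have hK0 : 0 ≤ K := by positivity
    filter_upwards [(tendsto_rpow_atTop hε).eventually_ge_atTop (K + R),
      eventually_ge_atTop (Real.exp 1), eventually_ge_atTop ‖z0‖,
      eventually_ge_atTop (1/R), eventually_ge_atTop 1] with r hr1 hr2 hr3 hr4 hr5
    have hrpos : 0 < r := lt_of_lt_of_le one_pos hr5
    have hRr1 : 1 ≤ R * r := by
      have := (div_le_iff₀ hRpos).mp hr4
      linarith [this]
    have hlogr : 1 ≤ Real.log r := by
      have := Real.log_le_log (Real.exp_pos 1) hr2
      rwa [Real.log_exp] at this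
    set Mr : ℝ := maxModulus Λs r with hMr
    have hMlow : c ≤ Mr := hlow r hr3 hrpos
    have hMup : Mr ≤ A * R * Real.exp (R * r) := hup r hrpos.le
    have hMpos : 0 < Mr := lt_of_lt_of_le hc hMlow
    have hARpos : 0 < A * R := mul_pos hApos hRpos
    have hRrnn : 0 < R * r := mul_pos hRpos hrpos
    have hlup : Real.log Mr ≤ K + R * r := by
      have h := Real.log_le_log hMpos hMup
      rw [Real.log_mul (ne_of_gt hARpos) (Real.exp_ne_zero _), Real.log_exp] at h
      have h2 := le_abs_self (Real.log (A*R))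
      have h3 := abs_nonneg (Real.log c)
      simp only [hK]
      linarith
    have hllow : -(K + R * r) ≤ Real.log Mr := by
      have h := Real.log_le_log hc hMlow
      have h2 := neg_abs_le (Real.log c)
      have h3 := abs_nonneg (Real.log (A*R))
      simp only [hK]
      linarith
    have habsle : |Real.log Mr| ≤ K + R * r := abs_le.mpr ⟨hllow, hlup⟩
    have hKRr1 : 1 ≤ K + R * r := by linarith
    have hstep : Real.log (Real.log Mr) ≤ Real.log (K + R * r) := by
      rw [← Real.log_abs]
      rcases eq_or_lt_of_le (abs_nonneg (Real.log Mr)) with h0 | h0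
      · rw [← h0, Real.log_zero]
        exact Real.log_nonneg hKRr1
      · exact Real.log_le_log h0 habsle
    have hfin : Real.log (K + R * r) ≤ (1 + ε) * Real.log r := by
      have ha : K + R * r ≤ (K + R) * r := by nlinarith
      have hb' : (K + R) * r ≤ r ^ ε * r := mul_le_mul_of_nonneg_right hr1 hrpos.le
      have h3 : Real.log (K + R * r) ≤ Real.log (r ^ ε * r) :=
        Real.log_le_log (by linarith) (le_trans ha hb')
      rw [Real.log_mul (by positivity) (ne_of_gt hrpos), Real.log_rpow hrpos] at h3
      linarith
    rw [div_le_iff₀ (by linarith : (0:ℝ) < Real.log r)]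
    linarith
  have horder : orderOfGrowth Λs ≤ 1 := by
    rw [orderOfGrowth, Filter.limsup_eq]
    by_cases hbb : BddBelow {a : ℝ | ∀ᶠ r in atTop,
        Real.log (Real.log (maxModulus Λs r)) / Real.log r ≤ a}
    · refine le_of_forall_pos_le_add fun ε hε => csInf_le hbb ?_
      exact hev ε hε
    · rw [Real.sInf_of_not_bddBelow hbb]
      norm_num
  have hnq1 : (1:ℝ) ≤ (n:ℝ) - q := by
    have : (q:ℝ) + 1 ≤ (n:ℝ) := by exact_mod_cast hq
    linarith
  exact ⟨hsol, horder, lt_of_le_of_lt horder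
    (by linarith [one_div_pos.mpr (lt_of_lt_of_le one_pos hnq1)])⟩
end
end

section
/- Assume n − q ≥ 2 and set ρ = 1 + 1/(n−q). Let h_0 : ℝ → ℝ be the 2π-periodic function with h_0(ϑ) = −(1/ρ)cos(ρϑ) for |ϑ| ≤ π, and assume each Λ_ν (0 ≤ ν ≤ n−q) is an entire solution of L[w] = 0 of order ρ whose Phragmén–Lindelöf indicator of order ρ is h_ν(ϑ) = h_0(ϑ − 2νπ/(n−q+1)). Then every subset of {Λ_0, Λ_1, …, Λ_{n−q}} consisting of n−q of these functions is linearly independent over ℂ. -/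
open Complex MeasureTheory Filter Set

noncomputable section

/-- The Phragmén–Lindelöf indicator of order `ρ` of `f`:
`h(ϑ) = limsup_{r→∞} log |f(r e^{iϑ})| / r^ρ`. -/
def plIndicator (f : ℂ → ℂ) (ρ ϑ : ℝ) : ℝ :=
  Filter.limsup
    (fun r : ℝ => Real.log ‖f ((r:ℂ) * Complex.exp (Complex.I * ϑ))‖ / r ^ ρ)
    Filter.atTop

lemma limsup_le_add (u : ℝ → ℝ) (c : ℝ) (h : Filter.limsup u Filter.atTop = c) (hc : c ≠ 0)
    {ε : ℝ} (hε : 0 < ε) : ∀ᶠ r in Filter.atTop, u r ≤ c + ε := by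
  set A := {a : ℝ | ∀ᶠ x in Filter.atTop, u x ≤ a} with hA
  have hls : Filter.limsup u Filter.atTop = sInf A := Filter.limsup_eq
  rcases Set.eq_empty_or_nonempty A with hAe | hAne
  · rw [hls, hAe, Real.sInf_empty] at h; exact absurd h.symm hc
  · by_cases hbd : BddBelow A
    · have hlt : sInf A < c + ε := by rw [← hls, h]; linarith
      obtain ⟨a, haA, halt⟩ := exists_lt_of_csInf_lt hAne hlt
      exact haA.mono fun x hx => hx.trans halt.le
    · obtain ⟨a, haA, halt⟩ : ∃ a ∈ A, a < c + ε := by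
        by_contra hcon; push_neg at hcon; exact hbd ⟨c + ε, fun a ha => hcon a ha⟩
      exact haA.mono fun x hx => hx.trans halt.le

lemma freq_ge_sub (u : ℝ → ℝ) (c : ℝ) (h : Filter.limsup u Filter.atTop = c) (hc : c ≠ 0)
    {ε : ℝ} (hε : 0 < ε) : ∃ᶠ r in Filter.atTop, c - ε ≤ u r := by
  set A := {a : ℝ | ∀ᶠ x in Filter.atTop, u x ≤ a} with hA
  have hls : Filter.limsup u Filter.atTop = sInf A := Filter.limsup_eq
  by_contra hcon
  rw [Filter.not_frequently] at hcon
  have hmem : (c - ε) ∈ A := by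
    refine hcon.mono fun x hx => ?_
    push_neg at hx; exact hx.le
  by_cases hbd : BddBelow A
  · have : sInf A ≤ c - ε := csInf_le hbd hmem
    rw [← hls, h] at this; linarith
  · rw [hls, Real.sInf_of_not_bddBelow hbd] at h; exact hc h.symm

lemma trigCore (m : ℕ) (hm : 2 ≤ m) (ρ : ℝ) (hρ : ρ = ((m:ℝ)+1)/m)
    (h0 : ℝ → ℝ) (hper : ∀ ϑ, h0 (ϑ + 2*Real.pi) = h0 ϑ)
    (hform : ∀ ϑ : ℝ, |ϑ| ≤ Real.pi → h0 ϑ = -(1/ρ) * Real.cos (ρ*ϑ)) :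
    ∃ cb : ℝ,
      cb < h0 (((m/2 : ℕ) : ℝ)*(2*Real.pi/(m+1)) + (2*Real.pi/(m+1))/8) ∧
      0 < h0 (((m/2 : ℕ) : ℝ)*(2*Real.pi/(m+1)) + (2*Real.pi/(m+1))/8) ∧
      (∀ k : ℕ, k ≤ m → h0 ((k:ℝ)*(2*Real.pi/(m+1)) + (2*Real.pi/(m+1))/8) ≠ 0) ∧
      (∀ k : ℕ, k ≤ m → k ≠ m/2 → k ≠ m/2+1 →
        h0 ((k:ℝ)*(2*Real.pi/(m+1)) + (2*Real.pi/(m+1))/8) ≤ cb) := by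
  have hπ := Real.pi_pos
  have hm0 : (0:ℝ) < (m:ℝ) := by exact_mod_cast Nat.lt_of_lt_of_le (by norm_num) hm
  have hm1 : (0:ℝ) < (m:ℝ) + 1 := by linarith
  set β : ℝ := Real.pi / (4*m) with hβdef
  have hβ : 0 < β := by positivity
  set δ : ℝ := 2*Real.pi/(m+1) with hδdef
  have hδ : 0 < δ := by positivity
  have hδm : δ * ((m:ℝ)+1) = 2*Real.pi := by rw [hδdef]; field_simp
  have hρpos : 0 < ρ := by rw [hρ]; positivity
  have hπβ : Real.pi = 4*(m:ℝ)*β := by rw [hβdef]; field_simp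
  set z : ℕ → ℤ := fun k => if 2*k ≤ m then 8*k+1-4*m else 4*m+7-8*k with hzdef
  set W : ℕ → ℝ := fun k => ((z k).natAbs : ℝ) * β with hWdef
  -- the key evaluation
  have key : ∀ k : ℕ, k ≤ m → h0 ((k:ℝ)*δ + δ/8) = Real.cos (W k) / ρ := by
    intro k hk
    have hcalc : ρ * ((k:ℝ)*δ + δ/8) = (8*(k:ℝ)+1)*β := by
      rw [hρ, hδdef, hβdef]; field_simp; ring
    have hkm : (k:ℝ) ≤ (m:ℝ) := by exact_mod_cast hk
    by_cases h2k : 2*k ≤ m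
    · have h2kr : 2*(k:ℝ) ≤ (m:ℝ) := by exact_mod_cast h2k
      have hxnn : 0 ≤ (k:ℝ)*δ + δ/8 := by positivity
      have hxle : (k:ℝ)*δ + δ/8 ≤ Real.pi := by
        have h1 : δ * (2*(k:ℝ) + 1/4) ≤ δ * ((m:ℝ)+1) :=
          mul_le_mul_of_nonneg_left (by linarith) hδ.le
        rw [hδm] at h1; linarith
      have hx : |(k:ℝ)*δ + δ/8| ≤ Real.pi := by rw [_root_.abs_of_nonneg hxnn]; exact hxle
      rw [hform _ hx, hcalc]
      have hzk : z k = 8*(k:ℤ)+1-4*m := by simp [hzdef, h2k]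
      have hcast : ((z k).natAbs : ℝ) = |8*(k:ℝ)+1-4*(m:ℝ)| := by
        rw [hzk]; push_cast [Nat.cast_natAbs]; ring_nf
      have e1 : (8*(k:ℝ)+1-4*(m:ℝ))*β = (8*(k:ℝ)+1)*β - Real.pi := by
        rw [hπβ]; ring
      have e2 : Real.cos (W k) = -Real.cos ((8*(k:ℝ)+1)*β) := by
        have h1 : ((z k).natAbs : ℝ) * β = |(8*(k:ℝ)+1-4*(m:ℝ))*β| := by
          rw [_root_.abs_mul, _root_.abs_of_pos hβ, ← hcast]
        show Real.cos (((z k).natAbs : ℝ) * β) = _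
        rw [h1, Real.cos_abs, e1, Real.cos_sub_pi]
      rw [e2]; ring
    · push_neg at h2k
      have h2kr : (m:ℝ) + 1 ≤ 2*(k:ℝ) := by exact_mod_cast h2k
      set x : ℝ := (k:ℝ)*δ + δ/8 with hxdef
      have hcalc' : ρ * x = (8*(k:ℝ)+1)*β := hcalc
      have hxge : Real.pi ≤ x := by
        have h1 : δ * ((m:ℝ)+1) ≤ δ * (2*(k:ℝ) + 1/4) :=
          mul_le_mul_of_nonneg_left (by linarith) hδ.le
        rw [hδm] at h1; rw [hxdef]; linarith
      have hxle : x ≤ 2*Real.pi := by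
        have h1 : δ * ((k:ℝ) + 1/8) ≤ δ * ((m:ℝ)+1) :=
          mul_le_mul_of_nonneg_left (by linarith) hδ.le
        rw [hδm] at h1; rw [hxdef]; linarith
      have hh : h0 x = h0 (x - 2*Real.pi) := by
        have := hper (x - 2*Real.pi); rw [sub_add_cancel] at this; exact this
      have habs : |x - 2*Real.pi| ≤ Real.pi := by
        rw [_root_.abs_le]; constructor <;> linarith
      rw [hh, hform _ habs]
      have hzk : z k = 4*(m:ℤ)+7-8*k := by simp [hzdef, not_le.mpr h2k]
      have hcast : ((z k).natAbs : ℝ) = |4*(m:ℝ)+7-8*(k:ℝ)| := by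
        rw [hzk]; push_cast [Nat.cast_natAbs]; ring_nf
      have hρ2π : ρ*(x - 2*Real.pi) = (8*(k:ℝ)+1)*β - 8*((m:ℝ)+1)*β := by
        have h2 : ρ * (2*Real.pi) = 8*((m:ℝ)+1)*β := by
          rw [hρ, hβdef]; field_simp; ring
        rw [mul_sub, hcalc', h2]
      have hcos : Real.cos (ρ*(x-2*Real.pi)) = Real.cos ((8*(m:ℝ)+7-8*(k:ℝ))*β) := by
        rw [hρ2π, show (8*(k:ℝ)+1)*β - 8*((m:ℝ)+1)*β = -((8*(m:ℝ)+7-8*(k:ℝ))*β) by ring,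
          Real.cos_neg]
      rw [hcos]
      have e1 : (4*(m:ℝ)+7-8*(k:ℝ))*β = (8*(m:ℝ)+7-8*(k:ℝ))*β - Real.pi := by
        rw [hπβ]; ring
      have e2 : Real.cos (W k) = -Real.cos ((8*(m:ℝ)+7-8*(k:ℝ))*β) := by
        have h1 : ((z k).natAbs : ℝ) * β = |(4*(m:ℝ)+7-8*(k:ℝ))*β| := by
          rw [_root_.abs_mul, _root_.abs_of_pos hβ, ← hcast]
        show Real.cos (((z k).natAbs : ℝ) * β) = _
        rw [h1, Real.cos_abs, e1, Real.cos_sub_pi]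
      rw [e2]; ring

  have hmz : m / 2 ≤ m := Nat.div_le_self m 2
  have hA0 : (z (m/2)).natAbs ≤ 3 := by
    simp only [hzdef]; rw [if_pos (by omega : 2*(m/2) ≤ m)]; omega
  have hAlt : ∀ k : ℕ, k ≤ m → (z k).natAbs < 4*m := by
    intro k hk; simp only [hzdef]; split_ifs <;> omega
  have hAne : ∀ k : ℕ, k ≤ m → (z k).natAbs ≠ 2*m := by
    intro k hk; simp only [hzdef]; split_ifs <;> omega
  have hAgap : ∀ k : ℕ, k ≤ m → k ≠ m/2 → k ≠ m/2+1 →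
      (z (m/2)).natAbs + 2 ≤ (z k).natAbs := by
    intro k hk h1 h2; simp only [hzdef]
    rw [if_pos (by omega : 2*(m/2) ≤ m)]; split_ifs <;> omega
  have hWnn : ∀ k : ℕ, 0 ≤ W k := by
    intro k; simp only [hWdef]; positivity
  have hWlt : ∀ k : ℕ, k ≤ m → W k < Real.pi := by
    intro k hk
    have := hAlt k hk
    have hc : ((z k).natAbs : ℝ) < 4*(m:ℝ) := by exact_mod_cast this
    simp only [hWdef]
    calc ((z k).natAbs : ℝ) * β < (4*(m:ℝ)) * β := by
          exact mul_lt_mul_of_pos_right hc hβ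
      _ = Real.pi := by rw [hπβ]
  have hW0le : W (m/2) ≤ 3*β := by
    have hc : ((z (m/2)).natAbs : ℝ) ≤ 3 := by exact_mod_cast hA0
    simp only [hWdef]
    exact mul_le_mul_of_nonneg_right hc hβ.le
  have hmr : (2:ℝ) ≤ (m:ℝ) := by exact_mod_cast hm
  have h5β : 5*β ≤ Real.pi := by
    rw [hπβ]; nlinarith [hβ, hmr]
  have h3β : 3*β < Real.pi/2 := by
    rw [hπβ]; nlinarith [hβ, hmr]
  have hcos0pos : 0 < Real.cos (W (m/2)) := by
    apply Real.cos_pos_of_mem_Ioo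
    rw [Set.mem_Ioo]
    constructor
    · linarith [hWnn (m/2)]
    · linarith [hW0le]
  refine ⟨Real.cos (W (m/2) + 2*β) / ρ, ?_, ?_, ?_, ?_⟩
  · rw [key (m/2) hmz]
    have : Real.cos (W (m/2) + 2*β) < Real.cos (W (m/2)) := by
      apply Real.cos_lt_cos_of_nonneg_of_le_pi (hWnn (m/2)) (by linarith [hW0le]) (by linarith)
    exact (div_lt_div_iff_of_pos_right hρpos).mpr this
  · rw [key (m/2) hmz]
    exact div_pos hcos0pos hρpos
  · intro k hk
    rw [key k hk]
    intro hzero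
    have hcz : Real.cos (W k) = 0 := by
      rcases div_eq_zero_iff.mp hzero with h | h
      · exact h
      · exact absurd h hρpos.ne'
    obtain ⟨nn, hnn⟩ := Real.cos_eq_zero_iff.mp hcz
    have h1 : (0:ℝ) ≤ (2*(nn:ℝ)+1) * Real.pi / 2 := hnn ▸ hWnn k
    have h2 : (2*(nn:ℝ)+1) * Real.pi / 2 < Real.pi := hnn ▸ hWlt k hk
    have hn1 : (0:ℝ) ≤ 2*(nn:ℝ)+1 := by nlinarith
    have hn2 : 2*(nn:ℝ)+1 < 2 := by nlinarith
    have hnz : nn = 0 := by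
      have a1 : (0:ℤ) ≤ 2*nn+1 := by exact_mod_cast hn1
      have a2 : (2:ℤ)*nn+1 < 2 := by exact_mod_cast hn2
      omega
    rw [hnz] at hnn
    have hWk : W k = Real.pi / 2 := by rw [hnn]; push_cast; ring
    have h2m : ((z k).natAbs : ℝ) * β = 2*(m:ℝ) * β := by
      have hh2 : W k = 2*(m:ℝ)*β := by rw [hWk, hπβ]; ring
      simpa only [hWdef] using hh2
    have hcast : ((z k).natAbs : ℝ) = 2*(m:ℝ) := mul_right_cancel₀ hβ.ne' h2m
    have : (z k).natAbs = 2*m := by exact_mod_cast hcast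
    exact hAne k hk this
  · intro k hk h1 h2
    rw [key k hk]
    have hgap : W (m/2) + 2*β ≤ W k := by
      have hc : ((z (m/2)).natAbs : ℝ) + 2 ≤ ((z k).natAbs : ℝ) := by
        exact_mod_cast hAgap k hk h1 h2
      simp only [hWdef]
      have h3 := mul_le_mul_of_nonneg_right hc hβ.le
      linarith
    have : Real.cos (W k) ≤ Real.cos (W (m/2) + 2*β) :=
      Real.cos_le_cos_of_nonneg_of_le_pi (by linarith [hWnn (m/2), hβ]) (hWlt k hk).le hgap
    exact (div_le_div_iff_of_pos_right hρpos).mpr this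


set_option maxHeartbeats 1000000 in
theorem statement14
    (n q : ℕ) (a b : ℕ → ℂ)
    (hn : 2 ≤ n) (hq : q < n) (hnq : 2 ≤ n - q)
    (hbq : b q = (-1 : ℂ) ^ (n - q + 1)) (hbq0 : ∀ j, q < j → b j = 0)
    (ha0b0 : a 0 ≠ 0 ∨ b 0 ≠ 0)
    (ρ : ℝ) (hρ : ρ = 1 + 1 / ((n : ℝ) - q))
    -- `h0` is the 2π-periodic function with `h0(ϑ) = −(1/ρ) cos(ρϑ)` for `|ϑ| ≤ π`
    (h0 : ℝ → ℝ) (hper : ∀ ϑ, h0 (ϑ + 2 * Real.pi) = h0 ϑ)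
    (hform : ∀ ϑ : ℝ, |ϑ| ≤ Real.pi → h0 ϑ = -(1 / ρ) * Real.cos (ρ * ϑ))
    -- the functions `Λ_ν`, `0 ≤ ν ≤ n − q` : entire solutions of `L[w]=0` of order `ρ`
    -- with indicator `h_ν(ϑ) = h0(ϑ − 2νπ/(n−q+1))`
    (Λ : ℕ → ℂ → ℂ)
    (hΛsol : ∀ ν ≤ n - q, SolvesL n a b (Λ ν))
    (hΛord : ∀ ν ≤ n - q, orderOfGrowth (Λ ν) = ρ)
    (hΛind : ∀ ν ≤ n - q, ∀ ϑ : ℝ,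
      plIndicator (Λ ν) ρ ϑ = h0 (ϑ - 2 * ν * Real.pi / ((n : ℝ) - q + 1))) :
    ∀ S : Finset ℕ, S ⊆ Finset.range (n - q + 1) → S.card = n - q →
      LinearIndependent ℂ (fun ν : S => Λ ν) := by
  classical
  intro S hSsub hScard
  set m := n - q with hmdef
  have hm2 : 2 ≤ m := hnq
  have hm0' : 0 < m := by omega
  have hmcast : ((n:ℝ) - (q:ℝ)) = (m:ℝ) := by
    rw [hmdef]; push_cast [Nat.cast_sub hq.le]; ring
  have hmR : (0:ℝ) < (m:ℝ) := by exact_mod_cast hm0'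
  have hρm : ρ = ((m:ℝ)+1)/(m:ℝ) := by
    rw [hρ, hmcast]; field_simp
  obtain ⟨cb, hcb_lt, hcb_pos, hcb_ne, hcb_le⟩ := trigCore m hm2 ρ hρm h0 hper hform
  set δ : ℝ := 2*Real.pi/((m:ℝ)+1) with hδdef
  set k₀ := m/2 with hk₀def
  set c0 : ℝ := h0 ((k₀:ℝ)*δ + δ/8) with hc0def
  rw [Fintype.linearIndependent_iff]
  intro g hg
  by_contra hcon
  push_neg at hcon
  obtain ⟨i₀, hi₀⟩ := hcon
  set G : ℕ → ℂ := fun ν => if h : ν ∈ S then g ⟨ν, h⟩ else 0 with hGdef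
  have hGi : ∀ i : S, G i = g i := fun i => dif_pos i.2
  have hsum : ∀ z : ℂ, ∑ ν ∈ S, G ν * Λ ν z = 0 := by
    intro z
    have h1 := congrFun hg z
    simp only [Finset.sum_apply, Pi.smul_apply, Pi.zero_apply, smul_eq_mul] at h1
    calc ∑ ν ∈ S, G ν * Λ ν z = ∑ i : S, G i * Λ i z := (Finset.sum_coe_sort S _).symm
      _ = ∑ i : S, g i * Λ i z := by
          apply Finset.sum_congr rfl; intro i _; rw [hGi]
      _ = 0 := h1
  set T : Finset ℕ := S.filter (fun ν => G ν ≠ 0) with hTdef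
  have hi₀T : (i₀ : ℕ) ∈ T := Finset.mem_filter.mpr ⟨i₀.2, by rw [hGi]; exact hi₀⟩
  have hsumT : ∀ z : ℂ, ∑ ν ∈ T, G ν * Λ ν z = 0 := by
    intro z; rw [← hsum z]
    apply Finset.sum_filter_of_ne
    intro x _ hfx hG
    exact hfx (by rw [hG, zero_mul])
  have hTS : T ⊆ S := Finset.filter_subset _ _
  have hTm : ∀ ν ∈ T, ν ≤ m := by
    intro ν hν
    have := hSsub (hTS hν)
    simpa [Nat.lt_succ_iff] using this
  have hGT : ∀ ν ∈ T, G ν ≠ 0 := fun ν hν => (Finset.mem_filter.mp hν).2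
  -- missing index
  obtain ⟨μ, hμm, hμS⟩ : ∃ μ, μ ≤ m ∧ μ ∉ S := by
    by_contra hcon2
    push_neg at hcon2
    have hsub : Finset.range (m+1) ⊆ S := by
      intro x hx
      exact hcon2 x (Nat.lt_succ_iff.mp (Finset.mem_range.mp hx))
    have := Finset.card_le_card hsub
    rw [Finset.card_range, hScard] at this
    omega
  -- choose ν₀ ∈ T whose cyclic predecessor is not in T
  have hQex : ∃ d, 1 ≤ d ∧ (μ + d) % (m+1) ∈ T := by
    refine ⟨if μ < (i₀:ℕ) then (i₀:ℕ) - μ else (i₀:ℕ) + (m+1) - μ, ?_, ?_⟩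
    · have : (i₀:ℕ) ≠ μ := fun h => hμS (h ▸ (hTS hi₀T))
      have h1 : (i₀:ℕ) ≤ m := hTm _ hi₀T
      split_ifs <;> omega
    · have h1 : (i₀:ℕ) ≤ m := hTm _ hi₀T
      split_ifs with h
      · rw [show μ + ((i₀:ℕ) - μ) = (i₀:ℕ) by omega, Nat.mod_eq_of_lt (by omega)]
        exact hi₀T
      · rw [show μ + ((i₀:ℕ) + (m+1) - μ) = (i₀:ℕ) + (m+1) by omega,
          Nat.add_mod_right, Nat.mod_eq_of_lt (by omega)]
        exact hi₀T
  set d₀ := Nat.find hQex with hd₀def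
  obtain ⟨hd₀1, hν₀T⟩ := Nat.find_spec hQex
  set ν₀ := (μ + d₀) % (m+1) with hν₀def
  have hν₀m : ν₀ ≤ m := Nat.lt_succ_iff.mp (Nat.mod_lt _ (by omega))
  have hpred : (ν₀ + m) % (m+1) ∉ T := by
    have hrw : (ν₀ + m) % (m+1) = (μ + (d₀ - 1)) % (m+1) := by
      rw [hν₀def, Nat.mod_add_mod]
      have : μ + d₀ + m = (μ + (d₀ - 1)) + (m+1) := by omega
      rw [this, Nat.add_mod_right]
    rw [hrw]
    rcases Nat.lt_or_ge 1 d₀ with hd | hd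
    · intro hmem
      exact (Nat.find_min hQex (show d₀ - 1 < d₀ by omega)) ⟨by omega, hmem⟩
    · have hd1 : d₀ = 1 := le_antisymm hd hd₀1
      rw [hd1]
      simpa [Nat.mod_eq_of_lt (show μ < m + 1 by omega)] using
        fun h => hμS (hTS h)
  -- the direction ϑ and the cyclic index map K
  set ϑ : ℝ := ((ν₀:ℝ) + (k₀:ℝ))*δ + δ/8 with hϑdef
  set jint : ℕ → ℤ := fun ν => (ν₀:ℤ) + (k₀:ℤ) - (ν:ℤ) with hjdef
  set K : ℕ → ℕ := fun ν => ((jint ν) % ((m:ℤ)+1)).toNat with hKdef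
  have hm1Z : (0:ℤ) < (m:ℤ)+1 := by positivity
  have hKnonneg : ∀ ν, (0:ℤ) ≤ (jint ν) % ((m:ℤ)+1) := fun ν =>
    Int.emod_nonneg _ (by omega)
  have hKcastZ : ∀ ν, ((K ν : ℕ) : ℤ) = (jint ν) % ((m:ℤ)+1) := by
    intro ν; simp only [hKdef]; exact Int.toNat_of_nonneg (hKnonneg ν)
  have hKm : ∀ ν, K ν ≤ m := by
    intro ν
    have h1 : (jint ν) % ((m:ℤ)+1) < (m:ℤ)+1 := Int.emod_lt_of_pos _ hm1Z
    have := hKcastZ ν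
    omega
  have hperI : ∀ (x : ℝ) (t : ℤ), h0 (x + t*(2*Real.pi)) = h0 x := by
    intro x t
    have hP : Function.Periodic h0 (2*Real.pi) := hper
    exact (hP.int_mul t) x
  have hδ2π : ((m:ℝ)+1) * δ = 2*Real.pi := by
    rw [hδdef]; field_simp
  have hKeq : ∀ ν, ν ≤ m → plIndicator (Λ ν) ρ ϑ = h0 ((K ν : ℝ)*δ + δ/8) := by
    intro ν hν
    have h1 := hΛind ν (by omega : ν ≤ n - q) ϑ
    rw [h1]
    have h2 : ϑ - 2 * (ν:ℝ) * Real.pi / ((n:ℝ) - (q:ℝ) + 1)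
        = ((jint ν : ℤ) : ℝ) * δ + δ/8 := by
      rw [hmcast, hϑdef, hjdef]
      push_cast
      rw [hδdef]
      field_simp
      ring
    rw [h2]
    have hdiv : ((m:ℤ)+1) * (jint ν / ((m:ℤ)+1)) + (jint ν) % ((m:ℤ)+1) = jint ν :=
      Int.mul_ediv_add_emod _ _
    have h3 : ((jint ν : ℤ) : ℝ) * δ + δ/8
        = ((K ν : ℝ) * δ + δ/8) + ((jint ν / ((m:ℤ)+1) : ℤ) : ℝ) * (2*Real.pi) := by
      rw [← hδ2π]
      have h4 : ((jint ν : ℤ) : ℝ)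
          = ((m:ℝ)+1) * ((jint ν / ((m:ℤ)+1) : ℤ) : ℝ) + (K ν : ℝ) := by
        have h5 : (((((m:ℤ)+1) * (jint ν / ((m:ℤ)+1)) + (jint ν) % ((m:ℤ)+1)) : ℤ) : ℝ)
            = ((jint ν : ℤ) : ℝ) := by rw [hdiv]
        rw [← h5]
        push_cast [← hKcastZ ν]
        ring
      rw [h4]; ring
    rw [h3, hperI]
  have hK0 : K ν₀ = k₀ := by
    have h1 : jint ν₀ = (k₀:ℤ) := by simp [hjdef]
    have h2 : (k₀:ℤ) % ((m:ℤ)+1) = (k₀:ℤ) := by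
      apply Int.emod_eq_of_lt (by positivity)
      have : k₀ ≤ m := Nat.div_le_self m 2
      omega
    simp only [hKdef, h1, h2]
    simp
  have hdvd_eq : ∀ x y : ℕ, x ≤ m → y ≤ m → ((m:ℤ)+1) ∣ ((x:ℤ) - (y:ℤ)) → x = y := by
    intro x y hx hy hdvd
    by_contra hne
    have h1 : (x:ℤ) - (y:ℤ) ≠ 0 := by
      intro h; apply hne; omega
    have h2 : ((m:ℤ)+1) ∣ |(x:ℤ) - (y:ℤ)| := (_root_.dvd_abs _ _).mpr hdvd
    have h3 := Int.le_of_dvd (_root_.abs_pos.mpr h1) h2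
    have h4 : |(x:ℤ) - (y:ℤ)| ≤ (m:ℤ) := by
      rw [_root_.abs_le]; omega
    omega
  have hKmod : ∀ ν k : ℕ, K ν = k → ((m:ℤ)+1) ∣ ((ν₀:ℤ) + (k₀:ℤ) - (ν:ℤ) - (k:ℤ)) := by
    intro ν k hK
    have h1 : (jint ν) % ((m:ℤ)+1) = (k:ℤ) := by rw [← hKcastZ, hK]
    have hdiv := Int.mul_ediv_add_emod (jint ν) ((m:ℤ)+1)
    rw [h1] at hdiv
    refine ⟨jint ν / ((m:ℤ)+1), ?_⟩
    simp only [hjdef] at hdiv ⊢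
    linarith
  have hKne : ∀ ν ∈ T, ν ≠ ν₀ → K ν ≠ k₀ := by
    intro ν hν hne hK
    have h1 := hKmod ν k₀ hK
    have h2 : ((m:ℤ)+1) ∣ ((ν₀:ℤ) - (ν:ℤ)) := by
      have : (ν₀:ℤ) + (k₀:ℤ) - (ν:ℤ) - (k₀:ℤ) = (ν₀:ℤ) - (ν:ℤ) := by ring
      rwa [this] at h1
    exact hne (hdvd_eq ν ν₀ (hTm ν hν) hν₀m (by
      have : ((ν:ℤ) - (ν₀:ℤ)) = -((ν₀:ℤ) - (ν:ℤ)) := by ring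
      rw [this]; exact dvd_neg.mpr h2))
  have hKne1 : ∀ ν ∈ T, K ν ≠ k₀ + 1 := by
    intro ν hν hK
    have h1 := hKmod ν (k₀+1) hK
    -- (m+1) ∣ ν₀ - 1 - ν, i.e. ν ≡ ν₀ - 1 ≡ ν₀ + m  [mod m+1]
    set p := (ν₀ + m) % (m+1) with hpdef
    have hpm : p ≤ m := Nat.lt_succ_iff.mp (Nat.mod_lt _ (by omega))
    have hpmod : ((m:ℤ)+1) ∣ ((ν₀:ℤ) + (m:ℤ) - (p:ℤ)) := by
      have h2 : (ν₀ + m) % (m+1) = p := rfl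
      have h3 : (m+1) ∣ (ν₀ + m - p) := by
        have h4 := Nat.mod_add_div (ν₀ + m) (m+1)
        refine ⟨(ν₀ + m)/(m+1), ?_⟩
        omega
      obtain ⟨t, ht⟩ := h3
      refine ⟨(t:ℤ), ?_⟩
      have hple : p ≤ ν₀ + m := by omega
      push_cast [Nat.cast_sub hple] at ht ⊢
      exact_mod_cast ht
    have h5 : ((m:ℤ)+1) ∣ ((ν:ℤ) - (p:ℤ)) := by
      have e1 : (ν:ℤ) - (p:ℤ)
          = (((ν₀:ℤ) + (m:ℤ) - (p:ℤ)) - ((ν₀:ℤ) + (k₀:ℤ) - (ν:ℤ) - ((k₀:ℤ)+1)) - ((m:ℤ)+1)) := by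
        push_cast
        ring
      rw [e1]
      exact dvd_sub (dvd_sub hpmod (by exact_mod_cast h1)) dvd_rfl
    have : ν = p := hdvd_eq ν p (hTm ν hν) hpm h5
    rw [this] at hν
    exact hpred hν
  -- the analytic contradiction
  have hc0pos : 0 < c0 := hcb_pos
  have hγ : 0 < c0 - cb := sub_pos.mpr hcb_lt
  set γ := c0 - cb with hγdef
  set ε := min (γ/4) (c0/2) with hεdef
  have hε : 0 < ε := lt_min (by linarith) (by linarith)
  set T' := T.erase ν₀ with hT'def
  have hupper : ∀ᶠ r : ℝ in Filter.atTop, ∀ ν ∈ T',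
      Real.log (‖Λ ν ((r:ℂ) * Complex.exp (Complex.I * ϑ))‖) / r ^ ρ
        ≤ cb + ε := by
    rw [eventually_all_finset]
    intro ν hν
    have hνT : ν ∈ T := Finset.mem_of_mem_erase hν
    have hνm : ν ≤ m := hTm ν hνT
    have hνne : ν ≠ ν₀ := Finset.ne_of_mem_erase hν
    have hlim : Filter.limsup
        (fun r : ℝ => Real.log (‖Λ ν ((r:ℂ) * Complex.exp (Complex.I * ϑ))‖) / r ^ ρ)
        Filter.atTop = h0 ((K ν : ℝ)*δ + δ/8) := hKeq ν hνm
    have hne0 : h0 ((K ν : ℝ)*δ + δ/8) ≠ 0 := hcb_ne (K ν) (hKm ν)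
    have hle : h0 ((K ν : ℝ)*δ + δ/8) ≤ cb :=
      hcb_le (K ν) (hKm ν) (hKne ν hνT hνne) (hKne1 ν hνT)
    exact (limsup_le_add _ _ hlim hne0 hε).mono fun r hr =>
      hr.trans (add_le_add_left hle ε)
  have hlim0 : Filter.limsup
      (fun r : ℝ => Real.log (‖Λ ν₀ ((r:ℂ) * Complex.exp (Complex.I * ϑ))‖) / r ^ ρ)
      Filter.atTop = c0 := by
    have h1 := hKeq ν₀ hν₀m
    rw [hK0] at h1
    exact h1
  have hlower := freq_ge_sub _ _ hlim0 (ne_of_gt hc0pos) hε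
  set B := ∑ ν ∈ T', ‖G ν‖ with hBdef
  have hGν₀ : G ν₀ ≠ 0 := hGT ν₀ hν₀T
  have habsG : 0 < ‖G ν₀‖ := norm_pos_iff.mpr hGν₀
  set Kc := Real.log B - Real.log (‖G ν₀‖) with hKcdef
  set R₀ : ℝ := max 1 ((2*(|Kc|+1))/γ) with hR₀def
  obtain ⟨r, hrlow, hrup, hrR⟩ :=
    (hlower.and_eventually (hupper.and (Filter.eventually_ge_atTop R₀))).exists
  have hr1 : 1 ≤ r := le_trans (le_max_left _ _) hrR
  have hr0 : 0 < r := by linarith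
  have hrρ : 0 < r ^ ρ := Real.rpow_pos_of_pos hr0 ρ
  have hρ1 : 1 ≤ ρ := by
    rw [hρm, le_div_iff₀ hmR]; linarith
  have hrρr : r ≤ r ^ ρ := by
    calc r = r ^ (1:ℝ) := (Real.rpow_one r).symm
      _ ≤ r ^ ρ := Real.rpow_le_rpow_of_exponent_le hr1 hρ1
  set zz : ℂ := (r:ℂ) * Complex.exp (Complex.I * ϑ) with hzzdef
  have hstep1 : Real.exp ((c0 - ε) * r ^ ρ) ≤ ‖Λ ν₀ zz‖ := by
    have h1 : (c0 - ε) * r ^ ρ ≤ Real.log (‖Λ ν₀ zz‖) := by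
      rw [← le_div_iff₀ hrρ]
      exact hrlow
    have hc0ε : 0 < c0 - ε := by
      have h2 : ε ≤ c0/2 := min_le_right _ _
      linarith
    have habs : 0 < ‖Λ ν₀ zz‖ := by
      rcases eq_or_lt_of_le (norm_nonneg (Λ ν₀ zz)) with heq | hpos
      · rw [← heq, Real.log_zero] at h1
        nlinarith
      · exact hpos
    calc Real.exp ((c0-ε)*r^ρ) ≤ Real.exp (Real.log (‖Λ ν₀ zz‖)) :=
          Real.exp_le_exp.mpr h1
      _ = _ := Real.exp_log habs
  have hstep2 : ∀ ν ∈ T', ‖Λ ν zz‖ ≤ Real.exp ((cb + ε) * r ^ ρ) := by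
    intro ν hν
    have h1 : Real.log (‖Λ ν zz‖) ≤ (cb + ε) * r ^ ρ :=
      (div_le_iff₀ hrρ).mp (hrup ν hν)
    rcases eq_or_lt_of_le (norm_nonneg (Λ ν zz)) with heq | hpos
    · rw [← heq]; exact (Real.exp_pos _).le
    · calc ‖Λ ν zz‖ = Real.exp (Real.log (‖Λ ν zz‖)) :=
            (Real.exp_log hpos).symm
        _ ≤ _ := Real.exp_le_exp.mpr h1
  have hsplit : G ν₀ * Λ ν₀ zz = - ∑ ν ∈ T', G ν * Λ ν zz := by
    have h2 : G ν₀ * Λ ν₀ zz + ∑ ν ∈ T', G ν * Λ ν zz = ∑ ν ∈ T, G ν * Λ ν zz := by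
      rw [hT'def]; exact Finset.add_sum_erase T (fun ν => G ν * Λ ν zz) hν₀T
    rw [hsumT zz] at h2
    exact eq_neg_of_add_eq_zero_left h2
  have hbound : ‖G ν₀‖ * ‖Λ ν₀ zz‖ ≤ B * Real.exp ((cb+ε)*r^ρ) := by
    rw [← norm_mul, hsplit, norm_neg]
    calc ‖∑ ν ∈ T', G ν * Λ ν zz‖
        ≤ ∑ ν ∈ T', ‖G ν * Λ ν zz‖ := norm_sum_le _ _
      _ = ∑ ν ∈ T', ‖G ν‖ * ‖Λ ν zz‖ := by
          apply Finset.sum_congr rfl; intro ν _; rw [norm_mul]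
      _ ≤ ∑ ν ∈ T', ‖G ν‖ * Real.exp ((cb+ε)*r^ρ) :=
          Finset.sum_le_sum fun ν hν =>
            mul_le_mul_of_nonneg_left (hstep2 ν hν) (norm_nonneg _)
      _ = B * Real.exp ((cb+ε)*r^ρ) := by rw [hBdef, Finset.sum_mul]
  have hchain : ‖G ν₀‖ * Real.exp ((c0-ε)*r^ρ) ≤ B * Real.exp ((cb+ε)*r^ρ) :=
    le_trans (mul_le_mul_of_nonneg_left hstep1 (norm_nonneg _)) hbound
  have hBpos : 0 < B := by
    by_contra hB
    push_neg at hB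
    have h1 : B * Real.exp ((cb+ε)*r^ρ) ≤ 0 :=
      mul_nonpos_of_nonpos_of_nonneg hB (Real.exp_pos _).le
    nlinarith [Real.exp_pos ((c0-ε)*r^ρ)]
  have hlog := Real.log_le_log (by positivity) hchain
  rw [Real.log_mul (ne_of_gt habsG) (Real.exp_ne_zero _),
    Real.log_mul (ne_of_gt hBpos) (Real.exp_ne_zero _), Real.log_exp, Real.log_exp] at hlog
  have hγ2 : (γ/2) * r^ρ ≤ Kc := by
    have hεγ : ε ≤ γ/4 := min_le_left _ _
    nlinarith [hrρ]
  have hrbig : (2*(|Kc|+1))/γ ≤ r := le_trans (le_max_right _ _) hrR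
  have hfin : |Kc| + 1 ≤ (γ/2) * r^ρ := by
    have h1 : (2*(|Kc|+1))/γ ≤ r^ρ := le_trans hrbig hrρr
    have h2 : γ/2 * ((2*(|Kc|+1))/γ) = |Kc|+1 := by
      field_simp
    nlinarith [hγ, _root_.abs_nonneg Kc]
  linarith [_root_.le_abs_self Kc]
end
end

section
/- Let φ(t) = exp(t²/2 + ψ(t)) be holomorphic on {t : |t| > R_0, |arg t| < π}, where ψ is holomorphic there and |ψ(t)| ≤ C|t|. Let 0 < θ < π/4 and λ > 1 with λθ < π/4, let z ∈ ℂ, and for r > R_0 let Γ_r be the arc t = i r e^{−iϑ}, 0 ≤ ϑ ≤ λθ. Then |(1/(2πi)) ∫_{Γ_r} φ(t)e^{−zt} dt| ≤ (r/8) exp(−(r²/2)cos(2λθ) + r(|z| + C)), and in particular this integral tends to 0 as r → ∞. -/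
open Complex MeasureTheory Filter Set

noncomputable section

/-- The integral `(1/(2πi)) ∫_{Γ_r} φ(t) e^{-zt} dt` over the arc
`Γ_r : t = i r e^{-iϑ}`, `0 ≤ ϑ ≤ λθ`. -/
def ArcIntegral (φ : ℂ → ℂ) (r lt : ℝ) (z : ℂ) : ℂ :=
  (1 / (2 * Real.pi * Complex.I)) *
    ∫ ϑ in (0:ℝ)..lt,
      φ (Complex.I * r * Complex.exp (-Complex.I * ϑ)) *
        Complex.exp (-z * (Complex.I * r * Complex.exp (-Complex.I * ϑ))) *
        ((r : ℂ) * Complex.exp (-Complex.I * ϑ))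

theorem statement19
    (R0 C : ℝ) (hR0 : 0 ≤ R0) (φ ψ : ℂ → ℂ)
    (hψd : DifferentiableOn ℂ ψ (Sector R0))
    (hψb : ∀ t ∈ Sector R0, ‖ψ t‖ ≤ C * ‖t‖)
    (hφ : ∀ t ∈ Sector R0, φ t = Complex.exp (t ^ 2 / 2 + ψ t))
    (hφd : DifferentiableOn ℂ φ (Sector R0))
    (θ lam : ℝ) (hθ : 0 < θ) (hθ' : θ < Real.pi / 4) (hlam : 1 < lam)
    (hlamθ : lam * θ < Real.pi / 4) (z : ℂ) :
    (∀ r : ℝ, R0 < r →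
      ‖ArcIntegral φ r (lam * θ) z‖ ≤
        (r / 8) * Real.exp (-(r ^ 2 / 2) * Real.cos (2 * lam * θ) + r * (‖z‖ + C))) ∧
    Filter.Tendsto (fun r : ℝ => ArcIntegral φ r (lam * θ) z) Filter.atTop (nhds 0) := by
  have hπ := Real.pi_pos
  have hlt0 : 0 < lam * θ := mul_pos (by linarith) hθ
  set c := Real.cos (2 * lam * θ) with hcdef
  set d := ‖z‖ + C with hddef
  have hcpos : 0 < c := Real.cos_pos_of_mem_Ioo ⟨by linarith, by linarith⟩
  have key : ∀ r : ℝ, R0 < r →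
      ‖ArcIntegral φ r (lam * θ) z‖ ≤
        (r / 8) * Real.exp (-(r ^ 2 / 2) * c + r * d) := by
    intro r hr
    have hrpos : 0 < r := lt_of_le_of_lt hR0 hr
    set M : ℝ := r * Real.exp (-(r ^ 2 / 2) * c + r * d) with hM
    have hbound : ∀ ϑ ∈ Set.uIoc (0:ℝ) (lam * θ),
        ‖φ (Complex.I * r * Complex.exp (-Complex.I * ϑ)) *
          Complex.exp (-z * (Complex.I * r * Complex.exp (-Complex.I * ϑ))) *
          ((r : ℂ) * Complex.exp (-Complex.I * ϑ))‖ ≤ M := by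
      intro ϑ hϑ
      rw [Set.uIoc_of_le hlt0.le] at hϑ
      obtain ⟨hϑ0, hϑ1⟩ := hϑ
      set t : ℂ := Complex.I * r * Complex.exp (-Complex.I * ϑ) with htdef
      have ht : t = (↑(r * Real.sin ϑ) : ℂ) + (↑(r * Real.cos ϑ) : ℂ) * Complex.I := by
        rw [htdef, show -Complex.I * (ϑ:ℂ) = ((-ϑ : ℝ) : ℂ) * Complex.I by push_cast; ring,
          Complex.exp_mul_I, ← Complex.ofReal_cos, ← Complex.ofReal_sin,
          Real.cos_neg, Real.sin_neg]
        push_cast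
        ring_nf
        rw [Complex.I_sq]
        ring
      have htre : t.re = r * Real.sin ϑ := by
        rw [ht]
        simp only [Complex.add_re, Complex.ofReal_re, Complex.mul_re, Complex.ofReal_im,
          Complex.I_re, Complex.I_im]
        ring
      have htim : t.im = r * Real.cos ϑ := by
        rw [ht]
        simp only [Complex.add_im, Complex.ofReal_im, Complex.mul_im, Complex.ofReal_re,
          Complex.I_re, Complex.I_im]
        ring
      have habs : ‖t‖ = r := by
        rw [htdef]; simp [Complex.norm_exp, abs_of_pos hrpos]
      have htmem : t ∈ Sector R0 := by
        refine ⟨by rwa [habs], abs_lt.2 ⟨Complex.neg_pi_lt_arg t, Complex.arg_lt_pi_iff.2 (Or.inr ?_)⟩⟩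
        rw [htim]
        have : 0 < Real.cos ϑ := Real.cos_pos_of_mem_Ioo ⟨by linarith, by linarith⟩
        positivity
      have hre2 : (t ^ 2).re = -(r ^ 2 * Real.cos (2 * ϑ)) := by
        rw [sq, Complex.mul_re, htre, htim, Real.cos_two_mul]
        linear_combination r ^ 2 * Real.sin_sq_add_cos_sq ϑ
      have hcoscos : c ≤ Real.cos (2 * ϑ) :=
        Real.cos_le_cos_of_nonneg_of_le_pi (by linarith) (by linarith) (by linarith)
      have hrexp : (t ^ 2 / 2 + ψ t + -z * t).re ≤ -(r ^ 2 / 2) * c + r * d := by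
        have h1 : (t ^ 2 / 2).re = (t ^ 2).re / 2 := by simp [Complex.div_re]
        have h2 : (ψ t).re ≤ C * r := le_trans (Complex.re_le_norm _) (by
          simpa [habs] using hψb t htmem)
        have h3 : (-z * t).re ≤ ‖z‖ * r := le_trans (Complex.re_le_norm _) (by
          simp [map_mul, habs])
        have h4 : (t ^ 2).re / 2 ≤ -(r ^ 2 / 2) * c := by
          rw [hre2]
          nlinarith [sq_nonneg r]
        simp only [Complex.add_re, h1]
        nlinarith [h2, h3, h4, hddef]
      calc ‖φ t * Complex.exp (-z * t) * ((r : ℂ) * Complex.exp (-Complex.I * ϑ))‖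
          = Real.exp ((t ^ 2 / 2 + ψ t + -z * t).re) * r := by
            rw [hφ t htmem, ← Complex.exp_add, norm_mul, norm_mul,
              Complex.norm_exp, Complex.norm_real, Real.norm_eq_abs, abs_of_pos hrpos, Complex.norm_exp]
            simp
        _ ≤ Real.exp (-(r ^ 2 / 2) * c + r * d) * r :=
            mul_le_mul_of_nonneg_right (Real.exp_le_exp.2 hrexp) hrpos.le
        _ = M := by rw [hM]; ring
    have hint := intervalIntegral.norm_integral_le_of_norm_le_const hbound
    have hMnn : 0 ≤ M := by positivity
    rw [ArcIntegral, norm_mul]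
    have habs1 : ‖(1 / (2 * (Real.pi : ℂ) * Complex.I))‖ = 1 / (2 * Real.pi) := by
      simp [map_div₀, abs_of_pos hπ]
    rw [habs1]
    have h8 : lam * θ / (2 * Real.pi) ≤ 1 / 8 := by
      rw [div_le_div_iff₀ (by linarith) (by norm_num)]
      linarith
    calc 1 / (2 * Real.pi) * ‖∫ ϑ in (0:ℝ)..(lam*θ), φ (Complex.I * r * Complex.exp (-Complex.I * ϑ)) *
          Complex.exp (-z * (Complex.I * r * Complex.exp (-Complex.I * ϑ))) *
          ((r : ℂ) * Complex.exp (-Complex.I * ϑ))‖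
        ≤ 1 / (2 * Real.pi) * (M * |lam * θ - 0|) :=
          mul_le_mul_of_nonneg_left hint (by positivity)
      _ = (lam * θ / (2 * Real.pi)) * M := by
          rw [abs_of_pos (by linarith : (0:ℝ) < lam * θ - 0)]; ring
      _ ≤ (1 / 8) * M := by gcongr
      _ = (r / 8) * Real.exp (-(r ^ 2 / 2) * c + r * d) := by rw [hM]; ring
  refine ⟨key, ?_⟩
  have hpoly : Tendsto (fun r : ℝ => r + (-(r ^ 2 / 2) * c + r * d)) atTop atBot := by
    have h1 : Tendsto (fun r : ℝ => (c / 2) * r - (1 + d)) atTop atTop := by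
      have := (tendsto_id.const_mul_atTop (by positivity : (0:ℝ) < c / 2))
      simpa [sub_eq_add_neg] using tendsto_atTop_add_const_right atTop (-(1 + d)) this
    have h2 : Tendsto (fun r : ℝ => r * ((c / 2) * r - (1 + d))) atTop atTop :=
      tendsto_id.atTop_mul_atTop₀ h1
    refine (tendsto_neg_atTop_atBot.comp h2).congr fun r => ?_
    simp only [Function.comp_apply, id_eq]
    ring
  have hg : Tendsto (fun r : ℝ => r / 8 * Real.exp (-(r ^ 2 / 2) * c + r * d)) atTop (nhds 0) := by
    refine squeeze_zero' (g := fun r : ℝ => (1 / 8) * Real.exp (r + (-(r ^ 2 / 2) * c + r * d))) ?_ ?_ ?_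
    · filter_upwards [eventually_ge_atTop (0:ℝ)] with r hr
      positivity
    · filter_upwards [eventually_ge_atTop (0:ℝ)] with r hr
      have hrle : r ≤ Real.exp r := le_trans (by linarith) (Real.add_one_le_exp r)
      calc r / 8 * Real.exp (-(r ^ 2 / 2) * c + r * d)
          ≤ Real.exp r / 8 * Real.exp (-(r ^ 2 / 2) * c + r * d) := by gcongr
        _ = 1 / 8 * Real.exp (r + (-(r ^ 2 / 2) * c + r * d)) := by
            rw [Real.exp_add r (-(r ^ 2 / 2) * c + r * d)]; ring
    · have := (Real.tendsto_exp_atBot.comp hpoly).const_mul (1 / 8 : ℝ)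
      simpa using this
  refine squeeze_zero_norm' ?_ hg
  filter_upwards [eventually_gt_atTop R0] with r hr
  simpa using key r hr
end
end
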